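/- arXiv:2102.07342 — 4 statements merged into one kernel-verified Lean document; each statement's English description precedes it below -/
import Mathlib

section
/- Let m = m(n) and p = p(n) satisfy p(n)·n → ∞ and p(n)·m(n) → ∞ as n → ∞, and suppose p is bounded away from 1 (i.e. there is a constant c < 1 with p(n) ≤ c for all n) and m = O(n) (i.e. there is a constant C with m(n) ≤ C·n for all n). Then there exists a constant κ > 0 such that, for H drawn from the edge-independent model H(n, m(n), p(n)), the probability that disc(H) ≥ κ · max{ 2^(−n/m(n)) · √(p(n)·n), 1 } tends to 1 as n → ∞. -/
open MeasureTheory ProbabilityTheory Filter Real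
open scoped ENNReal NNReal

/-- The Bernoulli measure on `Bool` with parameter `p`. -/
noncomputable def bernoulliMeasure (p : ℝ) : Measure Bool :=
  ENNReal.ofReal p • Measure.dirac true + ENNReal.ofReal (1 - p) • Measure.dirac false

/-- The edge-independent model `H(n,m,p)`: a random `m × n` `{0,1}`-matrix
(rows = edges, columns = vertices) with i.i.d. Bernoulli(p) entries. -/
noncomputable def edgeIndepModel (n m : ℕ) (p : ℝ) :
    Measure (Fin m → Fin n → Bool) :=
  Measure.pi fun _ : Fin m => Measure.pi fun _ : Fin n => bernoulliMeasure p

/-- Uniform measure on `{0,1}`-vectors of length `m` with exactly `d` ones. -/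
noncomputable def uniformColumn (m d : ℕ) : Measure (Fin m → Bool) :=
  (((Finset.univ.filter fun v : Fin m → Bool =>
      (Finset.univ.filter fun j => v j = true).card = d).card : ℝ≥0∞))⁻¹ •
    ∑ v ∈ Finset.univ.filter (fun v : Fin m → Bool =>
      (Finset.univ.filter fun j => v j = true).card = d), Measure.dirac v

/-- The edge-dependent model `H(n,m,d)`: the columns of the `m × n` incidence matrix
are independent, each uniform over the `{0,1}`-vectors with exactly `d` ones. -/
noncomputable def edgeDepModel (n m d : ℕ) : Measure (Fin m → Fin n → Bool) :=
  (Measure.pi fun _ : Fin n => uniformColumn m d).map fun B => fun i k => B k i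

/-- The discrepancy of an `m × n` `{0,1}`-incidence matrix: the minimum over
`±1`-colourings of the columns (vertices) of the maximum absolute signed row sum. -/
noncomputable def disc {m n : ℕ} (A : Fin m → Fin n → Bool) : ℕ :=
  ⨅ ψ : Fin n → Bool,
    Finset.univ.sup fun i : Fin m =>
      (∑ k : Fin n, if A i k then (if ψ k then (1 : ℤ) else -1) else 0).natAbs

namespace DiscLB
set_option maxHeartbeats 1000000
set_option linter.unusedSectionVars false
set_option linter.unusedVariables false
set_option linter.unusedTactic false

noncomputable def bt (N : ℕ) (p : ℝ) (j : ℕ) : ℝ :=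
  (N.choose j : ℝ) * p ^ j * (1 - p) ^ (N - j)

noncomputable def W {α : Type*} [Fintype α] (p : ℝ) (r : α → Bool) : ℝ :=
  ∏ k, (if r k then p else 1 - p)

def cnt {α : Type*} [Fintype α] [DecidableEq α] (r : α → Bool) : ℕ :=
  (Finset.univ.filter fun k => r k = true).card

def Srow {n : ℕ} (ψ : Fin n → Bool) (r : Fin n → Bool) : ℤ :=
  ∑ k, if r k then (if ψ k then (1 : ℤ) else -1) else 0

noncomputable def nu (n : ℕ) (p : ℝ) : Measure (Fin n → Bool) :=
  Measure.pi fun _ : Fin n => bernoulliMeasure p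

lemma sqrt_pi_le_stirlingSeq {n : ℕ} (hn : 1 ≤ n) : √π ≤ Stirling.stirlingSeq n := by
  obtain ⟨k, rfl⟩ := Nat.exists_eq_add_of_le hn
  have h := Stirling.stirlingSeq'_antitone
  have := Antitone.le_of_tendsto (f := Stirling.stirlingSeq ∘ Nat.succ) h
    (Stirling.tendsto_stirlingSeq_sqrt_pi.comp (tendsto_add_atTop_nat 1)) k
  simpa [Nat.succ_eq_add_one, Nat.add_comm] using this

lemma stirlingSeq_le {n : ℕ} (hn : 1 ≤ n) : Stirling.stirlingSeq n ≤ exp 1 / √2 := by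
  obtain ⟨k, rfl⟩ := Nat.exists_eq_add_of_le hn
  have h := Stirling.stirlingSeq'_antitone (Nat.zero_le k)
  simpa [Stirling.stirlingSeq_one, Nat.succ_eq_add_one, Nat.add_comm] using h

lemma factorial_ge {n : ℕ} (hn : 1 ≤ n) :
    √π * (√(2 * n) * (n / exp 1) ^ n) ≤ (n.factorial : ℝ) := by
  have h := sqrt_pi_le_stirlingSeq hn
  rw [Stirling.stirlingSeq] at h
  have hpos : 0 < √(2 * n) * (n / exp 1) ^ n := by positivity
  rw [le_div_iff₀ hpos] at h
  linarith

lemma factorial_le {n : ℕ} (hn : 1 ≤ n) :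
    (n.factorial : ℝ) ≤ (exp 1 / √2) * (√(2 * n) * (n / exp 1) ^ n) := by
  have h := stirlingSeq_le hn
  rw [Stirling.stirlingSeq] at h
  have hpos : 0 < √(2 * n) * (n / exp 1) ^ n := by positivity
  rw [div_le_iff₀ hpos] at h
  linarith


lemma bt_window (N j : ℕ) (p : ℝ) (hp : 0 < p) (hp1 : p < 1) (hjN : j ≤ N)
    (hNp : 100 ≤ N * p) (hNq : 100 ≤ N * (1 - p))
    (h1 : N * p ≤ 2 * j + 2) (h2 : N * (1 - p) ≤ 2 * ((N : ℝ) - j) + 2) :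
    bt N p j ≤ 1 / √(N * p * (1 - p)) := by
  set q : ℝ := 1 - p with hq
  have hq0 : 0 < q := by simp only [hq]; linarith
  have hj49 : (49 : ℝ) ≤ j := by nlinarith [hNp, h1]
  have hNj49 : (49 : ℝ) ≤ (N : ℝ) - j := by nlinarith [hNq, h2]
  have hj1 : 1 ≤ j := by exact_mod_cast le_trans (by norm_num : (1:ℝ) ≤ 49) hj49
  have hjN' : j < N := by
    have : (j : ℝ) < N := by linarith
    exact_mod_cast this
  have hN1 : 1 ≤ N := le_trans hj1 hjN
  have hNj1 : 1 ≤ N - j := by omega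
  have hcast : ((N - j : ℕ) : ℝ) = (N : ℝ) - j := by
    rw [Nat.cast_sub hjN]
  have hjR : (0:ℝ) < j := by linarith
  have hNjR : (0:ℝ) < (N:ℝ) - j := by linarith
  have hNR : (0:ℝ) < N := by positivity
  have hfact : (N.choose j : ℝ) * (j.factorial : ℝ) * ((N - j).factorial : ℝ)
      = (N.factorial : ℝ) := by
    exact_mod_cast congrArg (Nat.cast (R := ℝ)) (Nat.choose_mul_factorial_mul_factorial hjN)
  have hchoose : (N.choose j : ℝ)
      = (N.factorial : ℝ) / ((j.factorial : ℝ) * ((N - j).factorial : ℝ)) := by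
    rw [eq_div_iff (by positivity)]
    linear_combination hfact
  have hfj := factorial_ge hj1
  have hfNj := factorial_ge hNj1
  have hfN := factorial_le hN1
  rw [hcast] at hfNj
  have hchoose_le : (N.choose j : ℝ) ≤
      ((exp 1 / √2) * (√(2 * N) * ((N:ℝ) / exp 1) ^ N)) /
        ((√π * (√(2 * j) * ((j:ℝ) / exp 1) ^ j)) *
         (√π * (√(2 * ((N:ℝ) - j)) * (((N:ℝ) - j) / exp 1) ^ (N - j)))) := by
    rw [hchoose]
    apply div_le_div₀ (by positivity) hfN (by positivity)
    exact mul_le_mul hfj hfNj (le_of_lt (by positivity)) (le_of_lt (by positivity))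
  have hbt : bt N p j ≤
      ((exp 1 / √2) / (√π * √π)) * (√(2 * N) / (√(2 * j) * √(2 * ((N:ℝ) - j)))) *
        (((N:ℝ) * p / j) ^ j * ((N:ℝ) * q / ((N:ℝ) - j)) ^ (N - j)) := by
    have hpow : ((N:ℝ) / exp 1) ^ N = ((N:ℝ) / exp 1) ^ j * ((N:ℝ) / exp 1) ^ (N - j) := by
      rw [← pow_add]; congr 1; omega
    have key1 : ((N:ℝ) * p / j) ^ j
        = ((N:ℝ) / exp 1) ^ j * p ^ j / (((j:ℝ) / exp 1) ^ j) := by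
      rw [← mul_pow, ← div_pow]
      congr 1
      field_simp
    have key2 : ((N:ℝ) * q / ((N:ℝ) - j)) ^ (N - j)
        = ((N:ℝ) / exp 1) ^ (N - j) * q ^ (N - j) / ((((N:ℝ) - j) / exp 1) ^ (N - j)) := by
      rw [← mul_pow, ← div_pow]
      congr 1
      field_simp
    have step : bt N p j ≤
        (((exp 1 / √2) * (√(2 * N) * ((N:ℝ) / exp 1) ^ N)) /
        ((√π * (√(2 * j) * ((j:ℝ) / exp 1) ^ j)) *
         (√π * (√(2 * ((N:ℝ) - j)) * (((N:ℝ) - j) / exp 1) ^ (N - j))))) * (p ^ j * q ^ (N - j)) := by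
      unfold bt
      rw [mul_assoc]
      exact mul_le_mul_of_nonneg_right hchoose_le (by positivity)
    refine le_trans step (le_of_eq ?_)
    rw [key1, key2, hpow]
    have h1' : ((j:ℝ) / exp 1) ^ j ≠ 0 := by positivity
    have h2' : (((N:ℝ) - j) / exp 1) ^ (N - j) ≠ 0 := by positivity
    have h3' : √π ≠ 0 := by positivity
    have h4' : √(2 * (j:ℝ)) ≠ 0 := by positivity
    have h5' : √(2 * ((N:ℝ) - j)) ≠ 0 := by positivity
    field_simp
  have hG : ((N:ℝ) * p / j) ^ j * ((N:ℝ) * q / ((N:ℝ) - j)) ^ (N - j) ≤ 1 := by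
    have hw1 : (0:ℝ) ≤ (j:ℝ) / N := by positivity
    have hw2 : (0:ℝ) ≤ ((N:ℝ) - j) / N := by positivity
    have hp1' : (0:ℝ) ≤ (N:ℝ) * p / j := by positivity
    have hp2' : (0:ℝ) ≤ (N:ℝ) * q / ((N:ℝ) - j) := by positivity
    have hsum : (j:ℝ) / N + ((N:ℝ) - j) / N = 1 := by field_simp; ring
    have hgm := Real.geom_mean_le_arith_mean2_weighted hw1 hw2 hp1' hp2' hsum
    have harith : (j:ℝ) / N * ((N:ℝ) * p / j) + ((N:ℝ) - j) / N * ((N:ℝ) * q / ((N:ℝ) - j)) = 1 := by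
      field_simp
      simp only [hq]
      ring
    rw [harith] at hgm
    have hrpow : (((N:ℝ) * p / j) ^ ((j:ℝ) / N) * ((N:ℝ) * q / ((N:ℝ) - j)) ^ (((N:ℝ) - j) / N)) ^ (N:ℝ)
        = ((N:ℝ) * p / j) ^ j * ((N:ℝ) * q / ((N:ℝ) - j)) ^ (N - j) := by
      rw [Real.mul_rpow (by positivity) (by positivity), ← Real.rpow_natCast (((N:ℝ) * p / j)) j,
        ← Real.rpow_natCast ((N:ℝ) * q / ((N:ℝ) - j)) (N - j),
        ← Real.rpow_mul hp1', ← Real.rpow_mul hp2']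
      congr 2
      · field_simp
      · rw [hcast]; field_simp
    calc ((N:ℝ) * p / j) ^ j * ((N:ℝ) * q / ((N:ℝ) - j)) ^ (N - j)
        = (((N:ℝ) * p / j) ^ ((j:ℝ) / N) * ((N:ℝ) * q / ((N:ℝ) - j)) ^ (((N:ℝ) - j) / N)) ^ (N:ℝ) := hrpow.symm
      _ ≤ 1 ^ (N:ℝ) := Real.rpow_le_rpow (by positivity) hgm (by positivity)
      _ = 1 := Real.one_rpow _
  have hcoef : ((exp 1 / √2) / (√π * √π)) * (√(2 * N) / (√(2 * j) * √(2 * ((N:ℝ) - j))))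
      ≤ 1 / √((N:ℝ) * p * q) := by
    have hπ : √π * √π = π := Real.mul_self_sqrt (le_of_lt Real.pi_pos)
    rw [hπ, div_mul_div_comm, div_le_div_iff₀ (by positivity) (by positivity)]
    have ha : 0.98 * ((N:ℝ) * p) ≤ 2 * j := by nlinarith [hNp, h1]
    have hb : 0.98 * ((N:ℝ) * q) ≤ 2 * ((N:ℝ) - j) := by nlinarith [hNq, h2]
    have hab : (0.98 * ((N:ℝ) * p)) * (0.98 * ((N:ℝ) * q)) ≤ (2 * j) * (2 * ((N:ℝ) - j)) :=
      mul_le_mul ha hb (by positivity) (by positivity)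
    have hexp : exp 1 ^ 2 ≤ 0.98 ^ 2 * π ^ 2 := by
      have he : exp 1 < 2.7182818286 := Real.exp_one_lt_d9
      have hπ3 : 3.141592 < π := Real.pi_gt_d6
      nlinarith [exp_pos 1, Real.pi_pos]
    have key : (exp 1)^2 * (2 * N) * ((N:ℝ) * p * q) ≤ 2 * π^2 * ((2*j) * (2 * ((N:ℝ) - j))) := by
      have expand : (exp 1)^2 * (2 * N) * ((N:ℝ) * p * q) = 2 * (exp 1 ^ 2) * (((N:ℝ)*p) * ((N:ℝ)*q)) := by ring
      have expand2 : (0.98 * ((N:ℝ) * p)) * (0.98 * ((N:ℝ) * q)) = 0.98^2 * (((N:ℝ)*p) * ((N:ℝ)*q)) := by ring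
      rw [expand]
      have hNpq : (0:ℝ) ≤ ((N:ℝ)*p) * ((N:ℝ)*q) := by positivity
      calc 2 * (exp 1 ^ 2) * (((N:ℝ)*p) * ((N:ℝ)*q))
          ≤ 2 * (0.98 ^ 2 * π ^ 2) * (((N:ℝ)*p) * ((N:ℝ)*q)) := by
            apply mul_le_mul_of_nonneg_right _ hNpq
            nlinarith [hexp]
        _ = 2 * π^2 * (0.98^2 * (((N:ℝ)*p) * ((N:ℝ)*q))) := by ring
        _ ≤ 2 * π^2 * ((2*j) * (2 * ((N:ℝ) - j))) := by
            apply mul_le_mul_of_nonneg_left _ (by positivity)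
            rw [← expand2]; exact hab
    have e1 : (√(2 * (N:ℝ))) ^ 2 = 2 * N := Real.sq_sqrt (by positivity)
    have e2 : (√((N:ℝ) * p * q)) ^ 2 = (N:ℝ) * p * q := Real.sq_sqrt (by positivity)
    have e3 : (√(2 * (j:ℝ))) ^ 2 = 2 * j := Real.sq_sqrt (by positivity)
    have e4 : (√(2 * ((N:ℝ) - j))) ^ 2 = 2 * ((N:ℝ) - j) := Real.sq_sqrt (by positivity)
    have e5 : (√(2:ℝ)) ^ 2 = 2 := Real.sq_sqrt (by norm_num)
    have hsq : (exp 1 / √2 * √(2 * N) * √((N:ℝ) * p * q)) ^ 2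
        ≤ (π * (√(2 * j) * √(2 * ((N:ℝ) - j)))) ^ 2 := by
      have hs2 : (0:ℝ) < (√2:ℝ)^2 := by rw [e5]; norm_num
      calc (exp 1 / √2 * √(2 * N) * √((N:ℝ) * p * q)) ^ 2
          = ((exp 1)^2 * ((√(2*N))^2) * ((√((N:ℝ)*p*q))^2)) / ((√2)^2) := by ring
        _ = ((exp 1)^2 * (2 * N) * ((N:ℝ) * p * q)) / 2 := by rw [e1, e2, e5]
        _ ≤ (2 * π^2 * ((2*j) * (2 * ((N:ℝ) - j)))) / 2 := by
            apply div_le_div_of_nonneg_right key (by norm_num) |>.trans_eq rfl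
        _ = π^2 * ((2*j) * (2 * ((N:ℝ) - j))) := by ring
        _ = π^2 * ((√(2*j))^2 * ((√(2 * ((N:ℝ) - j)))^2)) := by rw [e3, e4]
        _ = (π * (√(2 * j) * √(2 * ((N:ℝ) - j)))) ^ 2 := by ring
    have h1' : (0:ℝ) ≤ exp 1 / √2 * √(2 * N) * √((N:ℝ) * p * q) := by positivity
    have h2' : (0:ℝ) ≤ π * (√(2 * j) * √(2 * ((N:ℝ) - j))) := by positivity
    calc exp 1 / √2 * √(2 * ↑N) * √(↑N * p * q)
        = √((exp 1 / √2 * √(2 * ↑N) * √((N:ℝ) * p * q))^2) := (Real.sqrt_sq h1').symm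
      _ ≤ √((π * (√(2 * j) * √(2 * ((N:ℝ) - j))))^2) := Real.sqrt_le_sqrt hsq
      _ = π * (√(2 * j) * √(2 * ((N:ℝ) - j))) := Real.sqrt_sq h2'
      _ = 1 * (π * (√(2 * ↑j) * √(2 * (↑N - ↑j)))) := by ring
  have hGnn : (0:ℝ) ≤ ((N:ℝ) * p / j) ^ j * ((N:ℝ) * q / ((N:ℝ) - j)) ^ (N - j) := by positivity
  have hfinal : ((exp 1 / √2) / (√π * √π)) * (√(2 * N) / (√(2 * j) * √(2 * ((N:ℝ) - j)))) *
        (((N:ℝ) * p / j) ^ j * ((N:ℝ) * q / ((N:ℝ) - j)) ^ (N - j))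
      ≤ (1 / √((N:ℝ) * p * q)) * 1 :=
    mul_le_mul hcoef hG hGnn (by positivity)
  calc bt N p j ≤ _ := hbt
    _ ≤ (1 / √((N:ℝ) * p * q)) * 1 := hfinal
    _ = 1 / √((N:ℝ) * p * q) := by ring


lemma bt_nonneg {N j : ℕ} {p : ℝ} (h0 : 0 ≤ p) (h1 : p ≤ 1) : 0 ≤ bt N p j := by
  have : 0 ≤ 1 - p := by linarith
  unfold bt; positivity

lemma bt_succ (N j : ℕ) (p : ℝ) (hj : j < N) :
    bt N p (j + 1) * (((j : ℝ) + 1) * (1 - p)) = bt N p j * (((N : ℝ) - j) * p) := by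
  unfold bt
  have h1 : N - j = (N - (j + 1)) + 1 := by omega
  have hcR : (N.choose (j + 1) : ℝ) * ((j : ℝ) + 1) = (N.choose j : ℝ) * ((N : ℝ) - j) := by
    have := Nat.choose_succ_right_eq N j
    have hc : ((N.choose (j + 1) * (j + 1) : ℕ) : ℝ) = ((N.choose j * (N - j) : ℕ) : ℝ) := by
      exact_mod_cast congrArg (Nat.cast (R := ℝ)) this
    push_cast [Nat.cast_sub hj.le] at hc
    linarith [hc]
  rw [h1, pow_succ]
  linear_combination (p ^ (j + 1) * (1 - p) ^ (N - (j + 1)) * (1 - p)) * hcR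
    + ((N.choose j : ℝ) * ((N : ℝ) - j) * (1 - p) ^ (N - (j + 1)) * (1 - p) * p ^ j) * (0 : ℝ)

lemma bt_step_up (N j : ℕ) (p : ℝ) (hp : 0 < p) (hp1 : p < 1)
    (h : (j : ℝ) + 1 ≤ N * p + p) : bt N p j ≤ bt N p (j + 1) := by
  have hq : (0:ℝ) < 1 - p := by linarith
  have hjN : j < N := by
    have : (j : ℝ) < N := by nlinarith
    exact_mod_cast this
  have hkey := bt_succ N j p hjN
  have hbtnn : 0 ≤ bt N p j := bt_nonneg hp.le hp1.le
  have hcond : ((j : ℝ) + 1) * (1 - p) ≤ ((N : ℝ) - j) * p := by nlinarith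
  have hpos : (0:ℝ) < ((j : ℝ) + 1) * (1 - p) := by positivity
  nlinarith [mul_le_mul_of_nonneg_left hcond hbtnn]

lemma bt_climb (N : ℕ) (p : ℝ) (hp : 0 < p) (hp1 : p < 1) (a b : ℕ) (hab : a ≤ b)
    (hb : (b : ℝ) ≤ N * p + p) : bt N p a ≤ bt N p b := by
  induction b, hab using Nat.le_induction with
  | base => exact le_refl _
  | succ b hab ih =>
    have hb' : (b : ℝ) ≤ N * p + p := by push_cast at hb ⊢; linarith
    exact le_trans (ih hb') (bt_step_up N b p hp hp1 (by push_cast at hb ⊢; linarith))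

lemma bt_zero_of_gt {N j : ℕ} {p : ℝ} (h : N < j) : bt N p j = 0 := by
  unfold bt
  rw [Nat.choose_eq_zero_of_lt h]
  simp

lemma bt_step_down (N j : ℕ) (p : ℝ) (hp : 0 < p) (hp1 : p < 1)
    (h : N * p + p ≤ (j : ℝ) + 1) : bt N p (j + 1) ≤ bt N p j := by
  have hq : (0:ℝ) < 1 - p := by linarith
  have hbtnn : 0 ≤ bt N p j := bt_nonneg hp.le hp1.le
  by_cases hjN : j < N
  · have hkey := bt_succ N j p hjN
    have hjRN : (j : ℝ) < N := by exact_mod_cast hjN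
    have hcond : ((N : ℝ) - j) * p ≤ ((j : ℝ) + 1) * (1 - p) := by nlinarith
    have hpos : (0:ℝ) < ((j : ℝ) + 1) * (1 - p) := by positivity
    have hbtnn1 : 0 ≤ bt N p (j + 1) := bt_nonneg hp.le hp1.le
    nlinarith [mul_le_mul_of_nonneg_left hcond hbtnn]
  · rw [bt_zero_of_gt (by omega)]
    exact hbtnn

lemma bt_desc (N : ℕ) (p : ℝ) (hp : 0 < p) (hp1 : p < 1) (a b : ℕ) (hab : a ≤ b)
    (ha : N * p + p ≤ (a : ℝ) + 1) : bt N p b ≤ bt N p a := by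
  induction b, hab using Nat.le_induction with
  | base => exact le_refl _
  | succ b hab ih =>
    refine le_trans (bt_step_down N b p hp hp1 ?_) ih
    have : (a : ℝ) ≤ b := by exact_mod_cast hab
    linarith

lemma bt_le (N : ℕ) (p : ℝ) (hp : 0 < p) (hp1 : p < 1)
    (hNp : 100 ≤ N * p) (hNq : 100 ≤ N * (1 - p)) (j : ℕ) :
    bt N p j ≤ 1 / √(N * p * (1 - p)) := by
  have hq : (0:ℝ) < 1 - p := by linarith
  have hNR : (100:ℝ) < N := by nlinarith
  have hrhs : (0:ℝ) ≤ 1 / √(N * p * (1 - p)) := by positivity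
  by_cases hjN : j ≤ N
  swap
  · rw [bt_zero_of_gt (by omega)]; exact hrhs
  by_cases hcase1 : 2 * (j : ℝ) + 2 < N * p
  · -- climb to J = ⌈Np/2⌉
    set J := Nat.ceil ((N : ℝ) * p / 2) with hJ
    have hJle : (N : ℝ) * p / 2 ≤ J := Nat.le_ceil _
    have hJlt : (J : ℝ) < (N : ℝ) * p / 2 + 1 := by
      have := Nat.ceil_lt_add_one (show (0:ℝ) ≤ (N : ℝ) * p / 2 by positivity)
      exact this
    have hjJ : j ≤ J := by
      have : (j : ℝ) < J := by linarith
      exact_mod_cast this.le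
    have hclimb : bt N p j ≤ bt N p J :=
      bt_climb N p hp hp1 j J hjJ (by nlinarith)
    refine le_trans hclimb (bt_window N J p hp hp1 ?_ hNp hNq ?_ ?_)
    · have : (J : ℝ) ≤ N := by nlinarith
      exact_mod_cast this
    · linarith
    · nlinarith
  by_cases hcase2 : 2 * ((N : ℝ) - j) + 2 < N * (1 - p)
  · -- descend to J' = N - ⌈Nq/2⌉
    set c := Nat.ceil ((N : ℝ) * (1 - p) / 2) with hc
    have hcle : (N : ℝ) * (1 - p) / 2 ≤ c := Nat.le_ceil _
    have hclt : (c : ℝ) < (N : ℝ) * (1 - p) / 2 + 1 := by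
      exact Nat.ceil_lt_add_one (by positivity)
    have hcN : c ≤ N := by
      have : (c : ℝ) ≤ N := by nlinarith
      exact_mod_cast this
    set J' := N - c with hJ'
    have hJ'cast : (J' : ℝ) = (N : ℝ) - c := by
      rw [hJ', Nat.cast_sub hcN]
    have hJ'j : J' ≤ j := by
      have hjR : (j : ℝ) ≤ N := by exact_mod_cast hjN
      have : (J' : ℝ) < j := by rw [hJ'cast]; nlinarith
      exact_mod_cast this.le
    have hdesc : bt N p j ≤ bt N p J' := by
      refine bt_desc N p hp hp1 J' j hJ'j ?_
      rw [hJ'cast]; nlinarith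
    refine le_trans hdesc (bt_window N J' p hp hp1 (by omega) hNp hNq ?_ ?_)
    · rw [hJ'cast]; nlinarith
    · rw [hJ'cast]; nlinarith
  · -- window directly
    push_neg at hcase1 hcase2
    exact bt_window N j p hp hp1 hjN hNp hNq hcase1 hcase2


section
variable {α : Type*} [Fintype α] [DecidableEq α]

lemma W_nonneg {p : ℝ} (h0 : 0 ≤ p) (h1 : p ≤ 1) (r : α → Bool) : 0 ≤ W p r := by
  unfold W
  apply Finset.prod_nonneg
  intro k _
  split <;> linarith

lemma sum_W (p : ℝ) : ∑ r : α → Bool, W p r = 1 := by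
  unfold W
  rw [← Fintype.piFinset_univ, ← Finset.prod_univ_sum (fun _ => (Finset.univ : Finset Bool))
    (fun _ b => if b then p else 1 - p)]
  simp

lemma sum_W_sign (p : ℝ) :
    ∑ r : α → Bool, W p r * (-1 : ℝ) ^ (cnt r) = (1 - 2 * p) ^ (Fintype.card α) := by
  have key : ∀ r : α → Bool, W p r * (-1 : ℝ) ^ (cnt r)
      = ∏ k, (if r k then -p else 1 - p) := by
    intro r
    have h1 : ∏ k ∈ Finset.univ.filter (fun k => r k = true), (if r k then (-1:ℝ) else 1)
        = (-1:ℝ) ^ (cnt r) := by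
      calc ∏ k ∈ Finset.univ.filter (fun k => r k = true), (if r k then (-1:ℝ) else 1)
          = ∏ _k ∈ Finset.univ.filter (fun k => r k = true), (-1:ℝ) :=
            Finset.prod_congr rfl (fun k hk => by simp [(Finset.mem_filter.mp hk).2])
        _ = (-1:ℝ) ^ (cnt r) := by rw [Finset.prod_const]; rfl
    have h2 : ∏ k ∈ Finset.univ.filter (fun k => ¬ r k = true), (if r k then (-1:ℝ) else 1) = 1 :=
      Finset.prod_eq_one (fun k hk => by simp [(Finset.mem_filter.mp hk).2])
    have hsign : (∏ k, (if r k then (-1:ℝ) else 1)) = (-1:ℝ) ^ (cnt r) := by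
      rw [← Finset.prod_filter_mul_prod_filter_not Finset.univ (fun k => r k = true)
        (fun k => if r k then (-1:ℝ) else 1), h1, h2, mul_one]
    calc W p r * (-1:ℝ) ^ (cnt r)
        = (∏ k, (if r k then p else 1 - p)) * ∏ k, (if r k then (-1:ℝ) else 1) := by
          rw [hsign]; rfl
      _ = ∏ k, ((if r k then p else 1 - p) * (if r k then (-1:ℝ) else 1)) :=
          (Finset.prod_mul_distrib).symm
      _ = ∏ k, (if r k then -p else 1 - p) :=
          Finset.prod_congr rfl (fun k _ => by by_cases h : r k <;> simp [h])
  rw [Finset.sum_congr rfl (fun r _ => key r)]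
  rw [← Fintype.piFinset_univ, ← Finset.prod_univ_sum (fun _ => (Finset.univ : Finset Bool))
    (fun _ b => if b then -p else 1 - p)]
  have h3 : ∀ k : α, (∑ b : Bool, (if b then -p else 1 - p)) = 1 - 2 * p := by
    intro k; simp; ring
  rw [Finset.prod_congr rfl (fun k _ => h3 k), Finset.prod_const, Finset.card_univ]

lemma sum_W_even (p : ℝ) :
    ∑ r ∈ Finset.univ.filter (fun r : α → Bool => Even (cnt r)), W p r
      = (1 + (1 - 2 * p) ^ (Fintype.card α)) / 2 := by
  have h1 : (∑ r ∈ Finset.univ.filter (fun r : α → Bool => Even (cnt r)), W p r)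
      + ∑ r ∈ Finset.univ.filter (fun r : α → Bool => ¬ Even (cnt r)), W p r = 1 := by
    rw [Finset.sum_filter_add_sum_filter_not]
    exact sum_W p
  have hA : ∑ r ∈ Finset.univ.filter (fun r : α → Bool => Even (cnt r)), W p r * (-1 : ℝ) ^ (cnt r)
      = ∑ r ∈ Finset.univ.filter (fun r : α → Bool => Even (cnt r)), W p r := by
    apply Finset.sum_congr rfl
    intro r hr
    rw [(Finset.mem_filter.mp hr).2.neg_one_pow, mul_one]
  have hB : ∑ r ∈ Finset.univ.filter (fun r : α → Bool => ¬ Even (cnt r)), W p r * (-1 : ℝ) ^ (cnt r)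
      = - ∑ r ∈ Finset.univ.filter (fun r : α → Bool => ¬ Even (cnt r)), W p r := by
    rw [← Finset.sum_neg_distrib]
    apply Finset.sum_congr rfl
    intro r hr
    have hodd : Odd (cnt r) := Nat.not_even_iff_odd.mp (Finset.mem_filter.mp hr).2
    rw [hodd.neg_one_pow]
    ring
  have hsign := sum_W_sign (α := α) p
  rw [← Finset.sum_filter_add_sum_filter_not Finset.univ (fun r : α → Bool => Even (cnt r))
      (fun r => W p r * (-1 : ℝ) ^ (cnt r)), hA, hB] at hsign
  linarith

lemma card_cnt (j : ℕ) :
    (Finset.univ.filter fun r : α → Bool => cnt r = j).card = (Fintype.card α).choose j := by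
  rw [← Finset.card_univ, ← Finset.card_powersetCard j (Finset.univ : Finset α)]
  apply Finset.card_bij (fun r _ => Finset.univ.filter fun k => r k = true)
  · intro r hr
    simp only [Finset.mem_filter, Finset.mem_univ, true_and] at hr
    rw [Finset.mem_powersetCard]
    exact ⟨Finset.filter_subset _ _ |>.trans (by simp), hr⟩
  · intro r₁ h₁ r₂ h₂ heq
    funext k
    have : (k ∈ Finset.univ.filter fun k => r₁ k = true) ↔ (k ∈ Finset.univ.filter fun k => r₂ k = true) := by
      rw [heq]
    simp only [Finset.mem_filter, Finset.mem_univ, true_and] at this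
    cases h1 : r₁ k <;> cases h2 : r₂ k <;> simp_all
  · intro T hT
    rw [Finset.mem_powersetCard] at hT
    refine ⟨fun k => decide (k ∈ T), ?_, ?_⟩
    · exact Finset.mem_filter.mpr ⟨Finset.mem_univ _, by unfold cnt; simpa using hT.2⟩
    · ext k; simp

lemma W_eq (p : ℝ) (r : α → Bool) :
    W p r = p ^ (cnt r) * (1 - p) ^ (Fintype.card α - cnt r) := by
  unfold W
  rw [← Finset.prod_filter_mul_prod_filter_not Finset.univ (fun k => r k = true)
    (fun k => if r k then p else 1 - p)]
  have h1 : ∏ k ∈ Finset.univ.filter (fun k => r k = true), (if r k then p else 1 - p)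
      = p ^ (cnt r) := by
    calc ∏ k ∈ Finset.univ.filter (fun k => r k = true), (if r k then p else 1 - p)
        = ∏ _k ∈ Finset.univ.filter (fun k => r k = true), p :=
          Finset.prod_congr rfl (fun k hk => by simp [(Finset.mem_filter.mp hk).2])
      _ = p ^ (cnt r) := by rw [Finset.prod_const]; rfl
  have hcard : (Finset.univ.filter (fun k => ¬ r k = true)).card = Fintype.card α - cnt r := by
    rw [Finset.filter_not, Finset.card_sdiff_of_subset (Finset.filter_subset _ _), Finset.card_univ]
    rfl
  have h2 : ∏ k ∈ Finset.univ.filter (fun k => ¬ r k = true), (if r k then p else 1 - p)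
      = (1 - p) ^ (Fintype.card α - cnt r) := by
    calc ∏ k ∈ Finset.univ.filter (fun k => ¬ r k = true), (if r k then p else 1 - p)
        = ∏ _k ∈ Finset.univ.filter (fun k => ¬ r k = true), (1 - p) :=
          Finset.prod_congr rfl (fun k hk => by simp [(Finset.mem_filter.mp hk).2])
      _ = (1 - p) ^ (Fintype.card α - cnt r) := by rw [Finset.prod_const, hcard]
  rw [h1, h2]

lemma sum_W_cnt (p : ℝ) (j : ℕ) :
    ∑ r ∈ Finset.univ.filter (fun r : α → Bool => cnt r = j), W p r
      = bt (Fintype.card α) p j := by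
  have hcongr : ∀ r ∈ Finset.univ.filter (fun r : α → Bool => cnt r = j),
      W p r = p ^ j * (1 - p) ^ (Fintype.card α - j) := by
    intro r hr
    rw [W_eq, (Finset.mem_filter.mp hr).2]
  rw [Finset.sum_congr rfl hcongr, Finset.sum_const, card_cnt]
  unfold bt
  push_cast
  ring

end

lemma sum_W_cntZ {α : Type*} [Fintype α] [DecidableEq α] (p : ℝ) (hp : 0 < p) (hp1 : p < 1)
    (hNp : 100 ≤ (Fintype.card α : ℝ) * p) (hNq : 100 ≤ (Fintype.card α : ℝ) * (1 - p)) (z : ℤ) :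
    ∑ u ∈ Finset.univ.filter (fun u : α → Bool => (cnt u : ℤ) = z), W p u
      ≤ 1 / √((Fintype.card α : ℝ) * p * (1 - p)) := by
  by_cases hz : 0 ≤ z
  · have heq : Finset.univ.filter (fun u : α → Bool => (cnt u : ℤ) = z)
        = Finset.univ.filter (fun u : α → Bool => cnt u = z.toNat) := by
      apply Finset.filter_congr
      intro u _
      constructor
      · intro h; omega
      · intro h; omega
    rw [heq, sum_W_cnt]
    exact bt_le _ p hp hp1 hNp hNq _
  · have heq : Finset.univ.filter (fun u : α → Bool => (cnt u : ℤ) = z) = ∅ := by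
      apply Finset.filter_eq_empty_iff.mpr
      intro u _
      omega
    rw [heq, Finset.sum_empty]
    positivity

lemma split_bound (n : ℕ) (P : Fin n → Prop) [DecidablePred P] (p : ℝ) (hp : 0 < p)
    (hp1 : p < 1)
    (hNp : 100 ≤ (Fintype.card {k : Fin n // P k} : ℝ) * p)
    (hNq : 100 ≤ (Fintype.card {k : Fin n // P k} : ℝ) * (1 - p)) (y : ℤ) :
    ∑ r ∈ Finset.univ.filter (fun r : Fin n → Bool =>
        ((cnt (fun k : {k : Fin n // P k} => r k.val) : ℤ)
          - (cnt (fun k : {k : Fin n // ¬ P k} => r k.val) : ℤ) = y)), W p r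
      ≤ 1 / √((Fintype.card {k : Fin n // P k} : ℝ) * p * (1 - p)) := by
  classical
  set M := 1 / √((Fintype.card {k : Fin n // P k} : ℝ) * p * (1 - p)) with hM
  have hq0 : (0:ℝ) < 1 - p := by linarith
  have hM0 : (0:ℝ) ≤ M := by rw [hM]; positivity
  set e := Equiv.piEquivPiSubtypeProd P (fun _ : Fin n => Bool) with he
  rw [Finset.sum_filter]
  have hcomp := Equiv.sum_comp e.symm (fun r : Fin n → Bool =>
    if ((cnt (fun k : {k : Fin n // P k} => r k.val) : ℤ)
        - (cnt (fun k : {k : Fin n // ¬ P k} => r k.val) : ℤ) = y) then W p r else 0)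
  rw [← hcomp, Fintype.sum_prod_type]
  have happ : ∀ (u : {k : Fin n // P k} → Bool) (v : {k : Fin n // ¬ P k} → Bool),
      ∀ k : {k : Fin n // P k}, (e.symm (u, v)) k.val = u k := by
    intro u v k
    rw [he]
    simp [Equiv.piEquivPiSubtypeProd_symm_apply, k.prop]
  have happ' : ∀ (u : {k : Fin n // P k} → Bool) (v : {k : Fin n // ¬ P k} → Bool),
      ∀ k : {k : Fin n // ¬ P k}, (e.symm (u, v)) k.val = v k := by
    intro u v k
    rw [he]
    simp [Equiv.piEquivPiSubtypeProd_symm_apply, k.prop]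
  have hcnt1 : ∀ u v, cnt (fun k : {k : Fin n // P k} => (e.symm (u, v)) k.val) = cnt u := by
    intro u v
    congr 1
    exact funext (happ u v)
  have hcnt2 : ∀ u v, cnt (fun k : {k : Fin n // ¬ P k} => (e.symm (u, v)) k.val) = cnt v := by
    intro u v
    congr 1
    exact funext (happ' u v)
  have hWsplit : ∀ u v, W p (e.symm (u, v)) = W p u * W p v := by
    intro u v
    unfold W
    rw [← Fintype.prod_subtype_mul_prod_subtype P (fun k => if (e.symm (u, v)) k then p else 1 - p)]
    congr 1
    · apply Finset.prod_congr rfl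
      intro k _
      rw [happ u v k]
    · apply Finset.prod_congr rfl
      intro k _
      rw [happ' u v k]
  have hpoint : ∀ u v,
      (if ((cnt (fun k : {k : Fin n // P k} => (e.symm (u, v)) k.val) : ℤ)
          - (cnt (fun k : {k : Fin n // ¬ P k} => (e.symm (u, v)) k.val) : ℤ) = y)
        then W p (e.symm (u, v)) else 0)
      = if ((cnt u : ℤ) - (cnt v : ℤ) = y) then W p u * W p v else 0 := by
    intro u v
    rw [hcnt1, hcnt2, hWsplit]
  calc (∑ u : {k : Fin n // P k} → Bool, ∑ v : {k : Fin n // ¬ P k} → Bool,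
        (if ((cnt (fun k : {k : Fin n // P k} => (e.symm (u, v)) k.val) : ℤ)
          - (cnt (fun k : {k : Fin n // ¬ P k} => (e.symm (u, v)) k.val) : ℤ) = y)
          then W p (e.symm (u, v)) else 0))
      = ∑ v : {k : Fin n // ¬ P k} → Bool, ∑ u : {k : Fin n // P k} → Bool,
        (if ((cnt u : ℤ) - (cnt v : ℤ) = y) then W p u * W p v else 0) := by
        rw [Finset.sum_comm]
        apply Finset.sum_congr rfl
        intro v _
        exact Finset.sum_congr rfl (fun u _ => hpoint u v)
    _ ≤ ∑ v : {k : Fin n // ¬ P k} → Bool, W p v * M := by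
        apply Finset.sum_le_sum
        intro v _
        have hinner : ∑ u : {k : Fin n // P k} → Bool,
            (if ((cnt u : ℤ) - (cnt v : ℤ) = y) then W p u * W p v else 0)
            = W p v * ∑ u ∈ Finset.univ.filter
                (fun u : {k : Fin n // P k} → Bool => (cnt u : ℤ) = y + cnt v), W p u := by
          rw [Finset.sum_filter, Finset.mul_sum]
          apply Finset.sum_congr rfl
          intro u _
          by_cases h : (cnt u : ℤ) - (cnt v : ℤ) = y
          · rw [if_pos h, if_pos (by omega), mul_comm]
          · rw [if_neg h, if_neg (by omega), mul_zero]
        rw [hinner]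
        apply mul_le_mul_of_nonneg_left _ (W_nonneg hp.le hp1.le v)
        exact sum_W_cntZ p hp hp1 hNp hNq _
    _ = (∑ v : {k : Fin n // ¬ P k} → Bool, W p v) * M := by rw [Finset.sum_mul]
    _ = M := by rw [sum_W, one_mul]

lemma Srow_eq {n : ℕ} (ψ r : Fin n → Bool) :
    Srow ψ r = (cnt (fun k : {k : Fin n // ψ k = true} => r k.val) : ℤ)
      - (cnt (fun k : {k : Fin n // ¬ ψ k = true} => r k.val) : ℤ) := by
  classical
  unfold Srow
  rw [← Fintype.sum_subtype_add_sum_subtype (fun k : Fin n => ψ k = true)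
      (fun k => if r k then (if ψ k then (1:ℤ) else -1) else 0)]
  have h1 : ∑ k : {k : Fin n // ψ k = true}, (if r k.val then (if ψ k.val then (1:ℤ) else -1) else 0)
      = (cnt (fun k : {k : Fin n // ψ k = true} => r k.val) : ℤ) := by
    calc ∑ k : {k : Fin n // ψ k = true}, (if r k.val then (if ψ k.val then (1:ℤ) else -1) else 0)
        = ∑ k : {k : Fin n // ψ k = true}, (if r k.val then (1:ℤ) else 0) := by
          apply Finset.sum_congr rfl
          intro k _
          rw [k.prop]
          simp
      _ = (cnt (fun k : {k : Fin n // ψ k = true} => r k.val) : ℤ) := by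
          rw [Finset.sum_boole]
          rfl
  have h2 : ∑ k : {k : Fin n // ¬ ψ k = true}, (if r k.val then (if ψ k.val then (1:ℤ) else -1) else 0)
      = - (cnt (fun k : {k : Fin n // ¬ ψ k = true} => r k.val) : ℤ) := by
    calc ∑ k : {k : Fin n // ¬ ψ k = true}, (if r k.val then (if ψ k.val then (1:ℤ) else -1) else 0)
        = ∑ k : {k : Fin n // ¬ ψ k = true}, -(if r k.val then (1:ℤ) else 0) := by
          apply Finset.sum_congr rfl
          intro k _
          have : ψ k.val = false := by
            cases h : ψ k.val
            · rfl
            · exact absurd h k.prop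
          rw [this]
          by_cases hr : r k.val <;> simp [hr]
      _ = - (cnt (fun k : {k : Fin n // ¬ ψ k = true} => r k.val) : ℤ) := by
          rw [Finset.sum_neg_distrib, Finset.sum_boole]
          rfl
  rw [h1, h2]
  ring

lemma Srow_eq_neg {n : ℕ} (ψ r : Fin n → Bool) :
    Srow ψ r = (cnt (fun k : {k : Fin n // ¬ ψ k = false} => r k.val) : ℤ)
      - (cnt (fun k : {k : Fin n // ψ k = false} => r k.val) : ℤ) := by
  classical
  unfold Srow
  rw [← Fintype.sum_subtype_add_sum_subtype (fun k : Fin n => ψ k = false)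
      (fun k => if r k then (if ψ k then (1:ℤ) else -1) else 0)]
  have h1 : ∑ k : {k : Fin n // ψ k = false}, (if r k.val then (if ψ k.val then (1:ℤ) else -1) else 0)
      = - (cnt (fun k : {k : Fin n // ψ k = false} => r k.val) : ℤ) := by
    calc ∑ k : {k : Fin n // ψ k = false}, (if r k.val then (if ψ k.val then (1:ℤ) else -1) else 0)
        = ∑ k : {k : Fin n // ψ k = false}, -(if r k.val then (1:ℤ) else 0) := by
          apply Finset.sum_congr rfl
          intro k _
          rw [k.prop]
          by_cases hr : r k.val <;> simp [hr]
      _ = - (cnt (fun k : {k : Fin n // ψ k = false} => r k.val) : ℤ) := by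
          rw [Finset.sum_neg_distrib, Finset.sum_boole]
          rfl
  have h2 : ∑ k : {k : Fin n // ¬ ψ k = false}, (if r k.val then (if ψ k.val then (1:ℤ) else -1) else 0)
      = (cnt (fun k : {k : Fin n // ¬ ψ k = false} => r k.val) : ℤ) := by
    calc ∑ k : {k : Fin n // ¬ ψ k = false}, (if r k.val then (if ψ k.val then (1:ℤ) else -1) else 0)
        = ∑ k : {k : Fin n // ¬ ψ k = false}, (if r k.val then (1:ℤ) else 0) := by
          apply Finset.sum_congr rfl
          intro k _
          have : ψ k.val = true := by
            cases h : ψ k.val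
            · exact absurd h k.prop
            · rfl
          rw [this]
          simp
      _ = (cnt (fun k : {k : Fin n // ¬ ψ k = false} => r k.val) : ℤ) := by
          rw [Finset.sum_boole]
          rfl
  rw [h1, h2]
  ring

lemma row_bound {n : ℕ} (ψ : Fin n → Bool) (p t : ℝ) (hp : 0 < p) (hp1 : p < 1)
    (hnp : 200 ≤ (n : ℝ) * p) (hnq : 200 ≤ (n : ℝ) * (1 - p)) (ht : 1 ≤ t) :
    ∑ r ∈ Finset.univ.filter (fun r : Fin n → Bool => (((Srow ψ r).natAbs : ℝ) < t)), W p r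
      ≤ 3 * t * (√2 / √((n : ℝ) * p * (1 - p))) := by
  classical
  have hq0 : (0:ℝ) < 1 - p := by linarith
  have hn0 : (0:ℝ) < n := by nlinarith
  set b : ℤ := (Nat.ceil t : ℤ) - 1 with hb
  have hcards : Fintype.card {k : Fin n // ψ k = true} + Fintype.card {k : Fin n // ψ k = false}
      = n := by
    rw [Fintype.card_subtype, Fintype.card_subtype]
    have : Finset.univ.filter (fun k : Fin n => ψ k = false)
        = Finset.univ.filter (fun k : Fin n => ¬ ψ k = true) := by
      apply Finset.filter_congr
      intro k _
      simp
    rw [this, Finset.card_filter_add_card_filter_not, Finset.card_univ, Fintype.card_fin]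
  have hpoint : ∀ x : ℤ, ∑ r ∈ Finset.univ.filter (fun r : Fin n → Bool => Srow ψ r = x), W p r
      ≤ √2 / √((n : ℝ) * p * (1 - p)) := by
    intro x
    by_cases hs : (n : ℝ) ≤ 2 * (Fintype.card {k : Fin n // ψ k = true} : ℝ)
    · have hc1 : (100 : ℝ) ≤ (Fintype.card {k : Fin n // ψ k = true} : ℝ) * p := by nlinarith
      have hc2 : (100 : ℝ) ≤ (Fintype.card {k : Fin n // ψ k = true} : ℝ) * (1 - p) := by nlinarith
      have heq : Finset.univ.filter (fun r : Fin n → Bool => Srow ψ r = x)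
          = Finset.univ.filter (fun r : Fin n → Bool =>
              ((cnt (fun k : {k : Fin n // ψ k = true} => r k.val) : ℤ)
                - (cnt (fun k : {k : Fin n // ¬ ψ k = true} => r k.val) : ℤ) = x)) := by
        apply Finset.filter_congr
        intro r _
        rw [Srow_eq ψ r]
      rw [heq]
      refine le_trans (split_bound n (fun k => ψ k = true) p hp hp1 hc1 hc2 x) ?_
      have h2s : (n:ℝ) * p * (1-p)
          ≤ 2 * ((Fintype.card {k : Fin n // ψ k = true} : ℝ) * p * (1-p)) := by
        nlinarith [mul_le_mul_of_nonneg_right hs (mul_pos hp hq0).le]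
      have hle : √((n:ℝ) * p * (1-p))
          ≤ √2 * √((Fintype.card {k : Fin n // ψ k = true} : ℝ) * p * (1-p)) := by
        rw [← Real.sqrt_mul (by norm_num : (0:ℝ) ≤ 2)]
        exact Real.sqrt_le_sqrt h2s
      rw [div_le_div_iff₀ (by positivity) (by positivity), one_mul]
      calc √((n:ℝ) * p * (1-p))
          ≤ √2 * √((Fintype.card {k : Fin n // ψ k = true} : ℝ) * p * (1-p)) := hle
        _ = √2 * √((Fintype.card {k : Fin n // ψ k = true} : ℝ) * p * (1-p)) := rfl
    · have hsge : (n : ℝ) ≤ 2 * (Fintype.card {k : Fin n // ψ k = false} : ℝ) := by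
        push_neg at hs
        have : ((Fintype.card {k : Fin n // ψ k = true} : ℝ))
            + (Fintype.card {k : Fin n // ψ k = false} : ℝ) = n := by exact_mod_cast hcards
        linarith
      have hc1 : (100 : ℝ) ≤ (Fintype.card {k : Fin n // ψ k = false} : ℝ) * p := by nlinarith
      have hc2 : (100 : ℝ) ≤ (Fintype.card {k : Fin n // ψ k = false} : ℝ) * (1 - p) := by nlinarith
      have heq : Finset.univ.filter (fun r : Fin n → Bool => Srow ψ r = x)
          = Finset.univ.filter (fun r : Fin n → Bool =>
              ((cnt (fun k : {k : Fin n // ψ k = false} => r k.val) : ℤ)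
                - (cnt (fun k : {k : Fin n // ¬ ψ k = false} => r k.val) : ℤ) = -x)) := by
        apply Finset.filter_congr
        intro r _
        rw [Srow_eq_neg ψ r]
        constructor
        · intro h; omega
        · intro h; omega
      rw [heq]
      refine le_trans (split_bound n (fun k => ψ k = false) p hp hp1 hc1 hc2 (-x)) ?_
      have h2s : (n:ℝ) * p * (1-p)
          ≤ 2 * ((Fintype.card {k : Fin n // ψ k = false} : ℝ) * p * (1-p)) := by
        nlinarith [mul_le_mul_of_nonneg_right hsge (mul_pos hp hq0).le]
      have hle : √((n:ℝ) * p * (1-p))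
          ≤ √2 * √((Fintype.card {k : Fin n // ψ k = false} : ℝ) * p * (1-p)) := by
        rw [← Real.sqrt_mul (by norm_num : (0:ℝ) ≤ 2)]
        exact Real.sqrt_le_sqrt h2s
      rw [div_le_div_iff₀ (by positivity) (by positivity), one_mul]
      exact hle
  -- interval decomposition
  have hsub : Finset.univ.filter (fun r : Fin n → Bool => ((Srow ψ r).natAbs : ℝ) < t)
      ⊆ (Finset.Icc (-b) b).biUnion
          (fun x => Finset.univ.filter (fun r : Fin n → Bool => Srow ψ r = x)) := by
    intro r hr
    simp only [Finset.mem_filter, Finset.mem_univ, true_and] at hr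
    rw [Finset.mem_biUnion]
    refine ⟨Srow ψ r, ?_, by simp⟩
    rw [Finset.mem_Icc]
    have h1 : ((Srow ψ r).natAbs : ℝ) < (Nat.ceil t : ℝ) := lt_of_lt_of_le hr (Nat.le_ceil t)
    have h2 : (Srow ψ r).natAbs < Nat.ceil t := by exact_mod_cast h1
    constructor <;> omega
  have hdisj : (↑(Finset.Icc (-b) b) : Set ℤ).PairwiseDisjoint
      (fun x => Finset.univ.filter (fun r : Fin n → Bool => Srow ψ r = x)) := by
    intro x _ y _ hxy
    apply Finset.disjoint_left.mpr
    intro r hrx hry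
    simp only [Finset.mem_filter, Finset.mem_univ, true_and] at hrx hry
    exact hxy (hrx ▸ hry ▸ rfl)
  have hcardIcc : ((Finset.Icc (-b) b).card : ℝ) ≤ 3 * t := by
    rw [Int.card_Icc]
    have hb0 : (0:ℤ) ≤ b := by
      have : (1:ℕ) ≤ Nat.ceil t := Nat.one_le_ceil_iff.mpr (by linarith)
      omega
    have hceil : (Nat.ceil t : ℝ) < t + 1 := Nat.ceil_lt_add_one (by linarith)
    have : (b + 1 - -b).toNat = 2 * (Nat.ceil t) - 1 := by omega
    rw [this]
    have h1 : (1:ℕ) ≤ Nat.ceil t := Nat.one_le_ceil_iff.mpr (by linarith)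
    have : ((2 * (Nat.ceil t) - 1 : ℕ) : ℝ) = 2 * (Nat.ceil t : ℝ) - 1 := by
      push_cast [Nat.cast_sub (by omega : 1 ≤ 2 * Nat.ceil t)]
      ring
    rw [this]
    linarith
  calc ∑ r ∈ Finset.univ.filter (fun r : Fin n → Bool => ((Srow ψ r).natAbs : ℝ) < t), W p r
      ≤ ∑ r ∈ (Finset.Icc (-b) b).biUnion
          (fun x => Finset.univ.filter (fun r : Fin n → Bool => Srow ψ r = x)), W p r :=
        Finset.sum_le_sum_of_subset_of_nonneg hsub (fun r _ _ => W_nonneg hp.le hp1.le r)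
    _ = ∑ x ∈ Finset.Icc (-b) b,
          ∑ r ∈ Finset.univ.filter (fun r : Fin n → Bool => Srow ψ r = x), W p r :=
        Finset.sum_biUnion hdisj
    _ ≤ ∑ _x ∈ Finset.Icc (-b) b, (√2 / √((n : ℝ) * p * (1 - p))) :=
        Finset.sum_le_sum (fun x _ => hpoint x)
    _ = ((Finset.Icc (-b) b).card : ℝ) * (√2 / √((n : ℝ) * p * (1 - p))) := by
        rw [Finset.sum_const, nsmul_eq_mul]
    _ ≤ 3 * t * (√2 / √((n : ℝ) * p * (1 - p))) := by
        apply mul_le_mul_of_nonneg_right hcardIcc (by positivity)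


instance bern_fin (p : ℝ) : IsFiniteMeasure (bernoulliMeasure p) := by
  constructor
  simp only [_root_.bernoulliMeasure, Measure.coe_add, Measure.coe_smul, Pi.add_apply, Pi.smul_apply,
    smul_eq_mul]
  rw [Measure.dirac_apply_of_mem (Set.mem_univ _), Measure.dirac_apply_of_mem (Set.mem_univ _),
    mul_one, mul_one]
  exact ENNReal.add_lt_top.mpr ⟨ENNReal.ofReal_lt_top, ENNReal.ofReal_lt_top⟩

lemma bern_prob {p : ℝ} (h0 : 0 ≤ p) (h1 : p ≤ 1) : IsProbabilityMeasure (bernoulliMeasure p) := by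
  constructor
  simp only [_root_.bernoulliMeasure, Measure.coe_add, Measure.coe_smul, Pi.add_apply, Pi.smul_apply,
    smul_eq_mul, Measure.dirac_apply_of_mem (Set.mem_univ _), mul_one]
  rw [← ENNReal.ofReal_add h0 (by linarith), ← ENNReal.ofReal_one]
  norm_num

lemma bern_singleton (p : ℝ) (h0 : 0 ≤ p) (h1 : p ≤ 1) (b : Bool) :
    bernoulliMeasure p {b} = ENNReal.ofReal (if b then p else 1 - p) := by
  simp only [_root_.bernoulliMeasure, Measure.coe_add, Measure.coe_smul, Pi.add_apply, Pi.smul_apply,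
    smul_eq_mul]
  cases b
  · rw [Measure.dirac_apply' _ (by exact MeasurableSet.singleton _),
      Measure.dirac_apply' _ (by exact MeasurableSet.singleton _)]
    simp
  · rw [Measure.dirac_apply' _ (by exact MeasurableSet.singleton _),
      Measure.dirac_apply' _ (by exact MeasurableSet.singleton _)]
    simp

lemma nu_singleton {n : ℕ} {p : ℝ} (h0 : 0 ≤ p) (h1 : p ≤ 1) (r : Fin n → Bool) :
    nu n p {r} = ENNReal.ofReal (W p r) := by
  have : ({r} : Set (Fin n → Bool)) = Set.univ.pi (fun k => {r k}) := by
    ext x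
    simp [funext_iff]
  rw [nu, this, Measure.pi_pi]
  have : ∀ k, bernoulliMeasure p {r k} = ENNReal.ofReal (if r k then p else 1 - p) :=
    fun k => bern_singleton p h0 h1 (r k)
  rw [Finset.prod_congr rfl (fun k _ => this k), W,
    ← ENNReal.ofReal_prod_of_nonneg (fun k _ => by split <;> linarith)]

lemma nu_finset {n : ℕ} {p : ℝ} (h0 : 0 ≤ p) (h1 : p ≤ 1) (S : Finset (Fin n → Bool)) :
    nu n p ↑S = ENNReal.ofReal (∑ r ∈ S, W p r) := by
  have : (↑S : Set (Fin n → Bool)) = ⋃ r ∈ S, {r} := by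
    ext x
    simp
  rw [this, measure_biUnion_finset ?_ (fun _ _ => MeasurableSet.singleton _)]
  · rw [Finset.sum_congr rfl (fun r _ => nu_singleton h0 h1 r),
      ← ENNReal.ofReal_sum_of_nonneg]
    intro r _
    unfold W
    apply Finset.prod_nonneg
    intro k _
    split <;> linarith
  · intro x _ y _ hxy
    simp [Function.onFun, Set.disjoint_singleton, hxy]

lemma mu_prod_set {n m : ℕ} {p : ℝ} (R : Set (Fin n → Bool)) :
    edgeIndepModel n m p {A | ∀ i, A i ∈ R} = (nu n p R) ^ m := by
  have : {A : Fin m → Fin n → Bool | ∀ i, A i ∈ R} = Set.univ.pi (fun _ => R) := by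
    ext A
    simp
  rw [edgeIndepModel, this, Measure.pi_pi]
  simp [nu, Finset.prod_const, Finset.card_univ]

lemma mu_prob {n m : ℕ} {p : ℝ} (h0 : 0 ≤ p) (h1 : p ≤ 1) :
    IsProbabilityMeasure (edgeIndepModel n m p) := by
  haveI : IsProbabilityMeasure (bernoulliMeasure p) := bern_prob h0 h1
  haveI : IsProbabilityMeasure (Measure.pi fun _ : Fin n => bernoulliMeasure p) :=
    MeasureTheory.Measure.pi.instIsProbabilityMeasure _
  exact MeasureTheory.Measure.pi.instIsProbabilityMeasure _


-- parity
lemma Srow_parity {n : ℕ} (ψ r : Fin n → Bool) : Srow ψ r % 2 = (cnt r : ℤ) % 2 := by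
  unfold Srow cnt
  rw [Finset.sum_int_mod]
  have : ∀ k : Fin n, (if r k then (if ψ k then (1:ℤ) else -1) else 0) % 2
      = (if r k then (1:ℤ) else 0) % 2 := by
    intro k
    by_cases hr : r k <;> by_cases hψ : ψ k <;> simp [hr, hψ]
  rw [Finset.sum_congr rfl (fun k _ => this k), ← Finset.sum_int_mod, Finset.sum_boole]

lemma Srow_ne_zero {n : ℕ} (ψ r : Fin n → Bool) (h : Odd (cnt r)) : Srow ψ r ≠ 0 := by
  intro h0
  have := Srow_parity ψ r
  rw [h0] at this
  rw [Nat.odd_iff] at h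
  omega

lemma one_le_disc {m n : ℕ} (A : Fin m → Fin n → Bool) (i : Fin m)
    (h : Odd (cnt (A i))) : 1 ≤ disc A := by
  unfold disc
  apply le_ciInf
  intro ψ
  have h1 : 1 ≤ (Srow ψ (A i)).natAbs := by
    rw [Nat.one_le_iff_ne_zero]
    simpa [Int.natAbs_eq_zero] using Srow_ne_zero ψ (A i) h
  exact le_trans h1 (Finset.le_sup (f := fun i => (Srow ψ (A i)).natAbs) (Finset.mem_univ i))

lemma exists_disc {m n : ℕ} (A : Fin m → Fin n → Bool) :
    ∃ ψ : Fin n → Bool, (Finset.univ.sup fun i : Fin m => (Srow ψ (A i)).natAbs) = disc A := by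
  have h : disc A = sInf (Set.range (fun ψ : Fin n → Bool =>
      Finset.univ.sup fun i : Fin m => (Srow ψ (A i)).natAbs)) := rfl
  rw [h]
  exact Nat.sInf_mem (Set.range_nonempty _)

-- main per-n bound
lemma main_bound (n mm : ℕ) (p c κ : ℝ) (hm : 1 ≤ mm) (hp0 : 0 < p) (hpc : p ≤ c)
    (hc1 : c < 1) (hc0 : 0 ≤ c) (hκ : κ = √(1 - c) / 9)
    (hnp : 200 ≤ (n : ℝ) * p) (hnq : 200 ≤ (n : ℝ) * (1 - p))
    (hhalf : (1 - 2 * p) ^ n ≤ (1 / 2 : ℝ)) :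
    edgeIndepModel n mm p
        {A | κ * max ((2 : ℝ) ^ (-(n : ℝ) / (mm : ℝ)) * Real.sqrt (p * n)) 1 ≤ (disc A : ℝ)}ᶜ
      ≤ ENNReal.ofReal ((3 / 4 : ℝ) ^ mm) + ENNReal.ofReal ((1 / 2 : ℝ) ^ mm) := by
  have hp1 : p < 1 := lt_of_le_of_lt hpc hc1
  have hq0 : (0:ℝ) < 1 - p := by linarith
  have hκ0 : 0 < κ := by
    rw [hκ]
    have h1c : (0:ℝ) < 1 - c := by linarith
    positivity
  have hκle : κ ≤ 1 / 9 := by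
    rw [hκ]
    have : √(1 - c) ≤ 1 :=
      le_trans (Real.sqrt_le_sqrt (by linarith : 1 - c ≤ 1)) (le_of_eq Real.sqrt_one)
    linarith
  set a : ℝ := (2 : ℝ) ^ (-(n : ℝ) / (mm : ℝ)) * Real.sqrt (p * n) with ha
  set t : ℝ := κ * max a 1 with htdef
  by_cases hcase : t ≤ 1
  · -- parity branch
    have hsub : {A : Fin mm → Fin n → Bool | t ≤ (disc A : ℝ)}ᶜ
        ⊆ {A : Fin mm → Fin n → Bool | ∀ i, A i ∈ {r : Fin n → Bool | Even (cnt r)}} := by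
      intro A hA
      simp only [Set.mem_compl_iff, Set.mem_setOf_eq, not_le] at hA
      intro i
      simp only [Set.mem_setOf_eq]
      by_contra hodd
      have h1 := one_le_disc A i (Nat.not_even_iff_odd.mp hodd)
      have h1' : (1:ℝ) ≤ (disc A : ℝ) := by exact_mod_cast h1
      linarith
    refine le_trans (measure_mono hsub) ?_
    rw [mu_prod_set]
    have hset : ({r : Fin n → Bool | Even (cnt r)} : Set _)
        = ↑(Finset.univ.filter fun r : Fin n → Bool => Even (cnt r)) := by
      ext r; simp
    rw [hset, nu_finset hp0.le hp1.le, sum_W_even]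
    have hbase : (1 + (1 - 2 * p) ^ (Fintype.card (Fin n))) / 2 ≤ (3/4 : ℝ) := by
      rw [Fintype.card_fin]
      linarith
    calc (ENNReal.ofReal ((1 + (1 - 2 * p) ^ (Fintype.card (Fin n))) / 2)) ^ mm
        ≤ (ENNReal.ofReal (3/4 : ℝ)) ^ mm := by
          exact pow_le_pow_left' (ENNReal.ofReal_le_ofReal hbase) mm
      _ = ENNReal.ofReal ((3/4 : ℝ) ^ mm) := by
          rw [ENNReal.ofReal_pow (by norm_num)]
      _ ≤ _ := self_le_add_right _ _
  · -- union bound branch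
    push_neg at hcase
    have hamax : max a 1 = a := by
      rcases le_or_gt 1 a with h | h
      · exact max_eq_left h
      · exfalso
        rw [htdef, max_eq_right h.le, mul_one] at hcase
        linarith
    have ht1 : 1 ≤ t := hcase.le
    have hmm0 : (0:ℝ) < mm := by exact_mod_cast hm
    -- the per-colouring row sets
    set R : (Fin n → Bool) → Finset (Fin n → Bool) :=
      fun ψ => Finset.univ.filter (fun r : Fin n → Bool => (((Srow ψ r).natAbs : ℝ) < t)) with hR
    have hsub : {A : Fin mm → Fin n → Bool | t ≤ (disc A : ℝ)}ᶜ
        ⊆ ⋃ ψ : Fin n → Bool, {A : Fin mm → Fin n → Bool | ∀ i, A i ∈ (↑(R ψ) : Set _)} := by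
      intro A hA
      simp only [Set.mem_compl_iff, Set.mem_setOf_eq, not_le] at hA
      obtain ⟨ψ, hψ⟩ := exists_disc A
      refine Set.mem_iUnion.mpr ⟨ψ, fun i => ?_⟩
      simp only [hR, Finset.coe_filter, Set.mem_setOf_eq, Finset.mem_univ, true_and]
      have hle : (Srow ψ (A i)).natAbs ≤ disc A :=
        hψ ▸ Finset.le_sup (f := fun i => (Srow ψ (A i)).natAbs) (Finset.mem_univ i)
      have : ((Srow ψ (A i)).natAbs : ℝ) ≤ (disc A : ℝ) := by exact_mod_cast hle
      linarith
    refine le_trans (measure_mono hsub) (le_trans (measure_iUnion_le _) ?_)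
    rw [tsum_fintype]
    -- per-colouring bound
    set u : ℝ := (1/2 : ℝ) * (2 : ℝ) ^ (-(n : ℝ) / (mm : ℝ)) with hu
    have hu0 : 0 ≤ u := by rw [hu]; positivity
    have hperψ : ∀ ψ : Fin n → Bool,
        edgeIndepModel n mm p {A : Fin mm → Fin n → Bool | ∀ i, A i ∈ (↑(R ψ) : Set _)}
          ≤ ENNReal.ofReal (u ^ mm) := by
      intro ψ
      rw [mu_prod_set, nu_finset hp0.le hp1.le]
      have hrow := row_bound ψ p t hp0 hp1 hnp hnq ht1
      have hq : 3 * t * (√2 / √((n : ℝ) * p * (1 - p))) ≤ u := by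
        rw [htdef, hamax, ha, hu]
        have hsqrt_np : √((n:ℝ) * p * (1 - p)) = √(p * (n:ℝ)) * √(1 - p) := by
          rw [← Real.sqrt_mul (by positivity)]
          congr 1
          ring
        rw [hsqrt_np]
        have hpn0 : (0:ℝ) < √(p * (n:ℝ)) := by
          apply Real.sqrt_pos.mpr
          nlinarith
        have h2pow : (0:ℝ) < (2 : ℝ) ^ (-(n : ℝ) / (mm : ℝ)) := by positivity
        have hkey : 3 * κ * √2 / √(1 - p) ≤ 1/2 := by
          have h1 : √(1 - c) ≤ √(1 - p) := Real.sqrt_le_sqrt (by linarith)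
          have h2 : (0:ℝ) < √(1 - c) := Real.sqrt_pos.mpr (by linarith)
          have h3 : (0:ℝ) < √(1 - p) := Real.sqrt_pos.mpr hq0
          rw [div_le_iff₀ h3, hκ]
          have hs2 : √2 ≤ 1.5 := by
            nlinarith [Real.sq_sqrt (show (0:ℝ) ≤ 2 by norm_num), Real.sqrt_nonneg 2]
          calc 3 * (√(1 - c) / 9) * √2 = √(1 - c) * √2 / 3 := by ring
            _ ≤ √(1 - p) * 1.5 / 3 := by
                apply div_le_div_of_nonneg_right ?_ (by norm_num) |>.trans_eq rfl
                apply mul_le_mul h1 hs2 (Real.sqrt_nonneg 2) (Real.sqrt_nonneg _)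
            _ = 1/2 * √(1 - p) := by ring
        calc 3 * (κ * ((2:ℝ) ^ (-(n:ℝ)/(mm:ℝ)) * √(p * (n:ℝ))))
              * (√2 / (√(p * (n:ℝ)) * √(1 - p)))
            = (2:ℝ) ^ (-(n:ℝ)/(mm:ℝ)) * (3 * κ * √2 / √(1 - p))
              * (√(p * (n:ℝ)) / √(p * (n:ℝ))) := by ring
          _ = (2:ℝ) ^ (-(n:ℝ)/(mm:ℝ)) * (3 * κ * √2 / √(1 - p)) := by
              rw [div_self (ne_of_gt hpn0), mul_one]
          _ ≤ (2:ℝ) ^ (-(n:ℝ)/(mm:ℝ)) * (1/2) := by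
              exact mul_le_mul_of_nonneg_left hkey h2pow.le
          _ = 1/2 * (2:ℝ) ^ (-(n:ℝ)/(mm:ℝ)) := by ring
      have hqsum : (∑ r ∈ R ψ, W p r) ≤ u := le_trans hrow hq
      calc (ENNReal.ofReal (∑ r ∈ R ψ, W p r)) ^ mm
          ≤ (ENNReal.ofReal u) ^ mm := pow_le_pow_left' (ENNReal.ofReal_le_ofReal hqsum) mm
        _ = ENNReal.ofReal (u ^ mm) := by rw [ENNReal.ofReal_pow hu0]
    refine le_trans (Finset.sum_le_sum (fun ψ _ => hperψ ψ)) ?_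
    rw [Finset.sum_const, Finset.card_univ]
    have hcard : Fintype.card (Fin n → Bool) = 2 ^ n := by
      rw [Fintype.card_fun, Fintype.card_bool, Fintype.card_fin]
    rw [hcard, nsmul_eq_mul]
    have hupow : u ^ mm = (1/2 : ℝ) ^ mm * ((2:ℝ) ^ n)⁻¹ := by
      rw [hu, mul_pow]
      congr 1
      rw [← Real.rpow_natCast ((2:ℝ) ^ (-(n : ℝ) / (mm : ℝ))) mm,
        ← Real.rpow_mul (by norm_num : (0:ℝ) ≤ 2)]
      have : (-(n : ℝ) / (mm : ℝ)) * (mm : ℝ) = -(n : ℝ) := by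
        field_simp
      rw [this, Real.rpow_neg (by norm_num : (0:ℝ) ≤ 2), Real.rpow_natCast]
    have h2n : ((2 ^ n : ℕ) : ℝ≥0∞) = ENNReal.ofReal ((2:ℝ) ^ n) := by
      rw [ENNReal.ofReal_pow (by norm_num : (0:ℝ) ≤ 2), ENNReal.ofReal_ofNat]
      norm_cast
    calc ((2 ^ n : ℕ) : ℝ≥0∞) * ENNReal.ofReal (u ^ mm)
        = ENNReal.ofReal ((2:ℝ) ^ n * u ^ mm) := by
          rw [h2n, ← ENNReal.ofReal_mul (by positivity)]
      _ = ENNReal.ofReal ((1/2 : ℝ) ^ mm) := by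
          rw [hupow]
          congr 1
          field_simp
      _ ≤ _ := self_le_add_left _ _


end DiscLB

open DiscLB in
/-- Theorem 1 (sparse case, `m = O(n)`) of "The Phase Transition of Discrepancy in
Random Hypergraphs": w.h.p. `disc(H) = Ω(max{2^{-n/m} √(pn), 1})` for
`H ∼ ℍ(n, m, p)`. -/
theorem edge_independent_lower_bound_sparse (m : ℕ → ℕ) (p : ℕ → ℝ)
    (hp0 : ∀ n, 0 ≤ p n)
    (hpn : Tendsto (fun n => p n * n) atTop atTop)
    (hpm : Tendsto (fun n => p n * m n) atTop atTop)
    (hpc : ∃ c : ℝ, c < 1 ∧ ∀ n, p n ≤ c)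
    (hmn : ∃ C : ℝ, ∀ n, (m n : ℝ) ≤ C * n) :
    ∃ κ : ℝ, 0 < κ ∧
      Tendsto (fun n =>
          edgeIndepModel n (m n) (p n)
            {A | κ * max ((2 : ℝ) ^ (-(n : ℝ) / (m n : ℝ)) * Real.sqrt (p n * n)) 1
              ≤ (disc A : ℝ)})
        atTop (nhds 1) := by
  classical
  obtain ⟨c₀, hc₀1, hc₀⟩ := hpc
  set c : ℝ := max c₀ 0 with hc
  have hc1 : c < 1 := max_lt hc₀1 one_pos
  have hc0 : (0:ℝ) ≤ c := le_max_right _ _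
  have hpc' : ∀ n, p n ≤ c := fun n => le_trans (hc₀ n) (le_max_left _ _)
  have h1c : (0:ℝ) < 1 - c := by linarith
  refine ⟨√(1 - c) / 9, by positivity, ?_⟩
  set κ : ℝ := √(1 - c) / 9 with hκ
  -- m → ∞
  have hmtopR : Tendsto (fun n => (m n : ℝ)) atTop atTop := by
    apply tendsto_atTop_mono _ hpm
    intro n
    have : p n * m n ≤ 1 * m n :=
      mul_le_mul_of_nonneg_right (by linarith [hpc' n]) (Nat.cast_nonneg _)
    linarith
  have hmtop : Tendsto m atTop atTop := by
    rw [← tendsto_natCast_atTop_iff (R := ℝ)]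
    exact hmtopR
  have hev_m1 : ∀ᶠ n in atTop, 1 ≤ m n := hmtop.eventually_ge_atTop 1
  have hev_np : ∀ᶠ n in atTop, 200 ≤ p n * n := hpn.eventually_ge_atTop 200
  have hev_nq : ∀ᶠ n : ℕ in atTop, 200 ≤ (n : ℝ) * (1 - p n) := by
    have h2 : Tendsto (fun n : ℕ => (n : ℝ) * (1 - c)) atTop atTop :=
      Tendsto.atTop_mul_const h1c (tendsto_natCast_atTop_atTop (R := ℝ))
    filter_upwards [h2.eventually_ge_atTop 200] with n hn
    have : (n : ℝ) * (1 - c) ≤ (n : ℝ) * (1 - p n) :=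
      mul_le_mul_of_nonneg_left (by linarith [hpc' n]) (Nat.cast_nonneg _)
    linarith
  -- the ρ^n → 0 fact
  set ρ : ℝ := max (1/2) (2 * c - 1) with hρdef
  have hρ0 : 0 ≤ ρ := le_trans (by norm_num) (le_max_left _ _)
  have hρ1 : ρ < 1 := max_lt (by norm_num) (by linarith)
  have hρ : Tendsto (fun n : ℕ => ρ ^ n) atTop (nhds 0) :=
    tendsto_pow_atTop_nhds_zero_of_lt_one hρ0 hρ1
  have hev_half : ∀ᶠ n in atTop, (1 - 2 * p n) ^ n ≤ (1/2 : ℝ) := by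
    filter_upwards [hρ.eventually_le_const (by norm_num : (0:ℝ) < 1/2), hev_np] with n h1 h2
    by_cases hp4 : p n ≤ 1/4
    · have hb0 : (0:ℝ) ≤ 1 - 2 * p n := by linarith
      have hle : 1 - 2 * p n ≤ exp (-(2 * p n)) := by
        have := Real.add_one_le_exp (-(2 * p n))
        linarith
      have hcalc : (exp (-(2 * p n))) ^ n = exp (-(2 * (p n * n))) := by
        rw [← Real.exp_nat_mul]
        congr 1
        ring
      calc (1 - 2 * p n) ^ n ≤ (exp (-(2 * p n))) ^ n := pow_le_pow_left₀ hb0 hle n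
        _ = exp (-(2 * (p n * n))) := hcalc
        _ ≤ exp (-1) := Real.exp_le_exp.mpr (by linarith)
        _ ≤ 1/2 := by
            rw [Real.exp_neg]
            rw [inv_le_comm₀ (Real.exp_pos 1) (by norm_num)]
            calc (1/2 : ℝ)⁻¹ = 2 := by norm_num
              _ ≤ exp 1 := by
                  have := Real.add_one_le_exp (1:ℝ)
                  linarith
    · have habs : |1 - 2 * p n| ≤ ρ := by
        rw [abs_le]
        constructor
        · have h2c : 2 * c - 1 ≤ ρ := le_max_right _ _
          have := hpc' n
          linarith
        · have hhalf' : (1/2 : ℝ) ≤ ρ := le_max_left _ _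
          linarith
      calc (1 - 2 * p n) ^ n ≤ |(1 - 2 * p n) ^ n| := le_abs_self _
        _ = |1 - 2 * p n| ^ n := by rw [abs_pow]
        _ ≤ ρ ^ n := pow_le_pow_left₀ (abs_nonneg _) habs n
        _ ≤ 1/2 := h1
  -- positivity of p eventually
  have hev_pp : ∀ᶠ n in atTop, 0 < p n := by
    filter_upwards [hev_np] with n hn
    by_contra hple
    push_neg at hple
    have : p n * n ≤ 0 := mul_nonpos_of_nonpos_of_nonneg hple (Nat.cast_nonneg _)
    linarith
  -- the bound sequence
  set g : ℕ → ℝ≥0∞ := fun n =>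
    ENNReal.ofReal ((3/4 : ℝ) ^ (m n)) + ENNReal.ofReal ((1/2 : ℝ) ^ (m n)) with hg
  have hgto : Tendsto g atTop (nhds 0) := by
    have h34 : Tendsto (fun n => ENNReal.ofReal ((3/4 : ℝ) ^ (m n))) atTop (nhds 0) := by
      rw [show (0 : ℝ≥0∞) = ENNReal.ofReal 0 from (ENNReal.ofReal_zero).symm]
      apply (ENNReal.continuous_ofReal.tendsto 0).comp
      exact (tendsto_pow_atTop_nhds_zero_of_lt_one (by norm_num) (by norm_num)).comp hmtop
    have h12 : Tendsto (fun n => ENNReal.ofReal ((1/2 : ℝ) ^ (m n))) atTop (nhds 0) := by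
      rw [show (0 : ℝ≥0∞) = ENNReal.ofReal 0 from (ENNReal.ofReal_zero).symm]
      apply (ENNReal.continuous_ofReal.tendsto 0).comp
      exact (tendsto_pow_atTop_nhds_zero_of_lt_one (by norm_num) (by norm_num)).comp hmtop
    have := h34.add h12
    simpa only [add_zero] using this
  -- complement tends to 0
  set T : (n : ℕ) → Set (Fin (m n) → Fin n → Bool) := fun n =>
    {A | κ * max ((2 : ℝ) ^ (-(n : ℝ) / (m n : ℝ)) * Real.sqrt (p n * n)) 1 ≤ (disc A : ℝ)}
    with hT
  have hev_le : ∀ᶠ n in atTop, edgeIndepModel n (m n) (p n) (T n)ᶜ ≤ g n := by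
    filter_upwards [hev_m1, hev_np, hev_nq, hev_half, hev_pp] with n h1 h2 h3 h4 h5
    exact main_bound n (m n) (p n) c κ h1 h5 (hpc' n) hc1 hc0 hκ
      (by rw [mul_comm] at h2; exact h2) h3 h4
  have hcompl_to : Tendsto (fun n => edgeIndepModel n (m n) (p n) (T n)ᶜ) atTop (nhds 0) := by
    apply tendsto_of_tendsto_of_tendsto_of_le_of_le' tendsto_const_nhds hgto
    · filter_upwards with n
      exact zero_le
    · exact hev_le
  -- conclude
  have hev_eq : ∀ᶠ n in atTop,
      edgeIndepModel n (m n) (p n) (T n)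
        = 1 - edgeIndepModel n (m n) (p n) (T n)ᶜ := by
    filter_upwards with n
    haveI : IsProbabilityMeasure (edgeIndepModel n (m n) (p n)) :=
      mu_prob (hp0 n) (by linarith [hpc' n])
    have hh := prob_compl_eq_one_sub (μ := edgeIndepModel n (m n) (p n))
      (Set.Finite.measurableSet (Set.toFinite ((T n)ᶜ)))
    rw [compl_compl] at hh
    exact hh
  have hlim : Tendsto (fun n => 1 - edgeIndepModel n (m n) (p n) (T n)ᶜ) atTop (nhds 1) := by
    have hc : Tendsto (fun x : ℝ≥0∞ => 1 - x) (nhds 0) (nhds 1) := by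
      have := (ENNReal.continuous_sub_left (by norm_num : (1 : ℝ≥0∞) ≠ ⊤)).tendsto 0
      simpa using this
    exact hc.comp hcompl_to
  exact Filter.Tendsto.congr' (hev_eq.mono fun n h => h.symm) hlim
end

section
/- Let m = m(n) and p = p(n) satisfy m(n) → ∞, p(n)·n → ∞, and p bounded away from 1 (there is a constant c < 1 with p(n) ≤ c for all n). Then for H drawn from the edge-independent model H(n, m(n), p(n)), the probability that disc(H) ≥ 1 tends to 1 as n → ∞. -/
open MeasureTheory ProbabilityTheory Filter Real
open scoped ENNReal NNReal

section DiscAux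

lemma bernoulli_singleton (p : ℝ) (b : Bool) :
    bernoulliMeasure p {b} = ENNReal.ofReal (if b then p else 1 - p) := by
  cases b <;> simp [_root_.bernoulliMeasure, Measure.dirac_apply]

lemma bernoulli_prob {p : ℝ} (h0 : 0 ≤ p) (h1 : p ≤ 1) :
    IsProbabilityMeasure (bernoulliMeasure p) := by
  constructor
  simp only [_root_.bernoulliMeasure, Measure.add_apply, Measure.smul_apply, smul_eq_mul,
    measure_univ, mul_one]
  rw [← ENNReal.ofReal_add h0 (by linarith)]
  norm_num

lemma pi_bern_singleton (n : ℕ) {p : ℝ} (h0 : 0 ≤ p) (h1 : p ≤ 1) (v : Fin n → Bool) :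
    (Measure.pi fun _ : Fin n => bernoulliMeasure p) {v}
      = ENNReal.ofReal (∏ k, if v k then p else 1 - p) := by
  haveI : ∀ _ : Fin n, IsProbabilityMeasure (bernoulliMeasure p) :=
    fun _ => bernoulli_prob h0 h1
  rw [← Set.univ_pi_singleton v, Measure.pi_pi,
    ENNReal.ofReal_prod_of_nonneg (fun k _ => by split <;> linarith)]
  exact Finset.prod_congr rfl fun k _ => bernoulli_singleton p (v k)

lemma sum_even_weight (n : ℕ) (p : ℝ) :
    ∑ v ∈ Finset.univ.filter (fun v : Fin n → Bool =>
        Even (Finset.univ.filter fun k => v k = true).card),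
      ∏ k, (if v k then p else 1 - p)
    = (1 + (1 - 2*p)^n) / 2 := by
  have hT : ∑ v : Fin n → Bool, ∏ k, (if v k then p else 1 - p) = 1 := by
    have h := Finset.prod_univ_sum (fun _ : Fin n => (Finset.univ : Finset Bool))
      (fun _ b => if b then p else 1 - p)
    rw [Fintype.piFinset_univ] at h
    rw [← h]
    simp
  have hD : ∑ v : Fin n → Bool, ∏ k, (if v k then -p else 1 - p) = (1 - 2*p)^n := by
    have h := Finset.prod_univ_sum (fun _ : Fin n => (Finset.univ : Finset Bool))
      (fun _ b => if b then -p else 1 - p)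
    rw [Fintype.piFinset_univ] at h
    rw [← h]
    have h2 : ∀ _k : Fin n, (∑ b : Bool, if b then -p else 1 - p) = 1 - 2*p := by
      intro _
      rw [Fintype.sum_bool]
      rw [if_pos rfl, if_neg Bool.false_ne_true]
      ring
    rw [Finset.prod_congr rfl fun k _ => h2 k, Finset.prod_const, Finset.card_univ,
      Fintype.card_fin]
  have hsign : ∀ v : Fin n → Bool,
      (∏ k, if v k then -p else 1 - p)
        = (-1 : ℝ)^((Finset.univ.filter fun k => v k = true).card)
          * ∏ k, (if v k then p else 1 - p) := by
    intro v
    calc (∏ k, if v k then -p else 1 - p)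
        = ∏ k, ((if v k then (-1:ℝ) else 1) * (if v k then p else 1 - p)) := by
          refine Finset.prod_congr rfl fun k _ => ?_
          cases h : v k <;> simp
      _ = (∏ k, (if v k then (-1:ℝ) else 1)) * ∏ k, (if v k then p else 1 - p) :=
          Finset.prod_mul_distrib
      _ = _ := by
          rw [Finset.prod_ite, Finset.prod_const, Finset.prod_const, one_pow, mul_one]
  have key : ∀ v : Fin n → Bool,
      (if Even (Finset.univ.filter fun k => v k = true).card
        then ∏ k, (if v k then p else 1 - p) else 0)
      = ((∏ k, (if v k then p else 1 - p)) + ∏ k, (if v k then -p else 1 - p)) / 2 := by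
    intro v
    rw [hsign v]
    by_cases h : Even (Finset.univ.filter fun k => v k = true).card
    · rw [if_pos h, Even.neg_one_pow h]; ring
    · rw [if_neg h, Odd.neg_one_pow (Nat.not_even_iff_odd.mp h)]; ring
  rw [Finset.sum_filter]
  simp_rw [key]
  rw [← Finset.sum_div, Finset.sum_add_distrib, hT, hD]

lemma nu_even (n : ℕ) {p : ℝ} (h0 : 0 ≤ p) (h1 : p ≤ 1) :
    (Measure.pi fun _ : Fin n => bernoulliMeasure p)
      {v : Fin n → Bool | Even (Finset.univ.filter fun k => v k = true).card}
    = ENNReal.ofReal ((1 + (1 - 2*p)^n) / 2) := by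
  have hset : {v : Fin n → Bool | Even (Finset.univ.filter fun k => v k = true).card}
      = ⋃ v ∈ (Finset.univ.filter (fun v : Fin n → Bool =>
          Even (Finset.univ.filter fun k => v k = true).card)), ({v} : Set (Fin n → Bool)) := by
    ext w; simp
  rw [hset, measure_biUnion_finset ?_ fun b _ => measurableSet_singleton b]
  · rw [← sum_even_weight n p, ENNReal.ofReal_sum_of_nonneg
      (fun v _ => Finset.prod_nonneg fun k _ => by split <;> linarith)]
    exact Finset.sum_congr rfl fun v _ => pi_bern_singleton n h0 h1 v
  · intro a _ b _ hab
    simp [Function.onFun, Set.disjoint_singleton, hab]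

lemma one_le_disc_of_odd {M N : ℕ} (A : Fin M → Fin N → Bool) (i : Fin M)
    (h : Odd (Finset.univ.filter fun k => A i k = true).card) : 1 ≤ disc A := by
  refine le_ciInf fun ψ => ?_
  have hS : (∑ k : Fin N, if A i k then (if ψ k then (1 : ℤ) else -1) else 0) ≠ 0 := by
    intro h0
    have hc : ((∑ k : Fin N, if A i k then (if ψ k then (1 : ℤ) else -1) else 0 : ℤ)
        : ZMod 2) = 0 := by rw [h0]; simp
    rw [Int.cast_sum] at hc
    have hterm : ∀ k : Fin N,
        ((if A i k then (if ψ k then (1 : ℤ) else -1) else 0 : ℤ) : ZMod 2)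
        = if A i k then 1 else 0 := by
      intro k
      by_cases hA : A i k
      · rw [if_pos hA, if_pos hA]
        by_cases hψ : ψ k
        · rw [if_pos hψ]; norm_num
        · rw [if_neg hψ]; norm_num; decide
      · rw [if_neg hA, if_neg hA]; norm_num
    rw [Finset.sum_congr rfl fun k _ => hterm k, Finset.sum_boole,
      ZMod.natCast_eq_zero_iff] at hc
    exact (Nat.not_even_iff_odd.mpr h) ((even_iff_two_dvd).mpr hc)
  calc (1:ℕ) ≤ (∑ k : Fin N, if A i k then (if ψ k then (1 : ℤ) else -1) else 0).natAbs :=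
      Int.natAbs_pos.mpr hS
    _ ≤ _ := Finset.le_sup (f := fun j : Fin M => (∑ k : Fin N, if A j k then (if ψ k then (1 : ℤ) else -1) else 0).natAbs) (Finset.mem_univ i)

end DiscAux

/-- Proposition 8 of "The Phase Transition of Discrepancy in Random Hypergraphs":
if `m → ∞`, `pn → ∞` and `p` is bounded away from `1`, then w.h.p.
`disc(H) ≥ 1` for `H ∼ ℍ(n, m, p)`. -/
theorem edge_independent_disc_ge_one (m : ℕ → ℕ) (p : ℕ → ℝ)
    (hp0 : ∀ n, 0 ≤ p n)
    (hm : Tendsto m atTop atTop)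
    (hpn : Tendsto (fun n => p n * n) atTop atTop)
    (hpc : ∃ c : ℝ, c < 1 ∧ ∀ n, p n ≤ c) :
    Tendsto (fun n => edgeIndepModel n (m n) (p n) {A | 1 ≤ disc A})
      atTop (nhds 1) := by
  obtain ⟨c, hc1, hpc⟩ := hpc
  have hp1 : ∀ k, p k ≤ 1 := fun k => (hpc k).trans hc1.le
  set Q : ℝ≥0∞ := ENNReal.ofReal (3/4) with hQdef
  have hQlt : Q < 1 := by rw [hQdef]; rw [ENNReal.ofReal_lt_one]; norm_num
  -- lower bound on the probability
  have hbound : ∀ k, (1 : ℝ≥0∞) - (ENNReal.ofReal ((1 + (1 - 2 * p k)^k) / 2))^(m k)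
      ≤ edgeIndepModel k (m k) (p k) {A | 1 ≤ disc A} := by
    intro k
    haveI hb : ∀ _ : Fin k, IsProbabilityMeasure (bernoulliMeasure (p k)) :=
      fun _ => bernoulli_prob (hp0 k) (hp1 k)
    haveI hnu : ∀ _ : Fin (m k),
        IsProbabilityMeasure (Measure.pi fun _ : Fin k => bernoulliMeasure (p k)) :=
      fun _ => inferInstance
    haveI : IsProbabilityMeasure (edgeIndepModel k (m k) (p k)) := by
      unfold edgeIndepModel; infer_instance
    set E : Set (Fin k → Bool) :=
      {v | Even (Finset.univ.filter fun j => v j = true).card} with hE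
    have hBad : edgeIndepModel k (m k) (p k) (Set.univ.pi fun _ : Fin (m k) => E)
        = (ENNReal.ofReal ((1 + (1 - 2 * p k)^k) / 2))^(m k) := by
      rw [edgeIndepModel, Measure.pi_pi]
      simp only [hE, nu_even k (hp0 k) (hp1 k)]
      rw [Finset.prod_const, Finset.card_univ, Fintype.card_fin]
    have hsub : (Set.univ.pi fun _ : Fin (m k) => E)ᶜ ⊆ {A | 1 ≤ disc A} := by
      intro A hA
      simp only [Set.mem_compl_iff, Set.mem_pi, Set.mem_univ, forall_true_left,
        not_forall] at hA
      obtain ⟨i, hi⟩ := hA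
      exact one_le_disc_of_odd A i (Nat.not_even_iff_odd.mp fun h => hi (by exact h))
    have hmeas : MeasurableSet (Set.univ.pi fun _ : Fin (m k) => E) :=
      (Set.to_countable _).measurableSet
    calc (1 : ℝ≥0∞) - (ENNReal.ofReal ((1 + (1 - 2 * p k)^k) / 2))^(m k)
        = edgeIndepModel k (m k) (p k) (Set.univ.pi fun _ : Fin (m k) => E)ᶜ := by
          rw [prob_compl_eq_one_sub hmeas, hBad]
      _ ≤ _ := measure_mono hsub
  -- eventually the base is at most 3/4
  have h34 : ∀ᶠ k in atTop, ENNReal.ofReal ((1 + (1 - 2 * p k)^k) / 2) ≤ Q := by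
    set r : ℝ := max (2*c - 1) 0 with hrdef
    have hr0 : 0 ≤ r := le_max_right _ _
    have hr1 : r < 1 := max_lt (by linarith) one_pos
    have hB : ∀ᶠ k in atTop, r^k ≤ 1/2 := by
      have := tendsto_pow_atTop_nhds_zero_of_lt_one hr0 hr1
      exact this.eventually (ge_mem_nhds (by norm_num))
    have hA : ∀ᶠ k in atTop, (1:ℝ) ≤ p k * k := hpn.eventually_ge_atTop 1
    filter_upwards [hA, hB] with k h1 h2
    have habs : (1 - 2 * p k)^k ≤ 1/2 := by
      rcases le_or_gt (p k) (1/2) with hc2 | hc2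
      · have hexp : 1 - 2 * p k ≤ Real.exp (-(2 * p k)) := by
          have := Real.add_one_le_exp (-(2 * p k)); linarith
        have hpow : (1 - 2 * p k)^k ≤ (Real.exp (-(2 * p k)))^k :=
          pow_le_pow_left₀ (by linarith) hexp k
        have heq : (Real.exp (-(2 * p k)))^k = Real.exp (-(2 * (p k * k))) := by
          rw [← Real.exp_nat_mul]; congr 1; ring
        have hle : Real.exp (-(2 * (p k * k))) ≤ Real.exp (-2) :=
          Real.exp_le_exp.mpr (by nlinarith)
        have h2le : Real.exp (-2) ≤ 1/2 := by
          rw [Real.exp_neg]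
          have h3 : (2:ℝ) ≤ Real.exp 2 := by
            have := Real.add_one_le_exp (2:ℝ); linarith
          rw [inv_le_comm₀ (Real.exp_pos 2) (by norm_num)] at *
          · linarith
        linarith [hpow, heq ▸ hpow]
      · have habs2 : |1 - 2 * p k| = -(1 - 2 * p k) := abs_of_neg (by linarith)
        have hle : (1 - 2 * p k)^k ≤ |1 - 2 * p k|^k := by
          rw [← abs_pow]; exact le_abs_self _
        have hrb : |1 - 2 * p k| ≤ r := by
          rw [habs2, hrdef]
          refine le_trans ?_ (le_max_left _ _)
          have := hpc k; linarith
        calc (1 - 2 * p k)^k ≤ |1 - 2 * p k|^k := hle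
          _ ≤ r^k := pow_le_pow_left₀ (abs_nonneg _) hrb k
          _ ≤ 1/2 := h2
    rw [hQdef]
    exact ENNReal.ofReal_le_ofReal (by linarith)
  -- squeeze
  have hpow0 : Tendsto (fun k => Q^(m k)) atTop (nhds 0) :=
    (ENNReal.tendsto_pow_atTop_nhds_zero_of_lt_one hQlt).comp hm
  have hlow : Tendsto (fun k => (1:ℝ≥0∞) - Q^(m k)) atTop (nhds 1) := by
    have := ENNReal.Tendsto.sub (tendsto_const_nhds (x := (1:ℝ≥0∞))) hpow0
      (Or.inl ENNReal.one_ne_top)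
    simpa using this
  refine tendsto_of_tendsto_of_tendsto_of_le_of_le' hlow tendsto_const_nhds ?_ ?_
  · filter_upwards [h34] with k hk
    exact le_trans (tsub_le_tsub_left (pow_le_pow_left' hk (m k)) 1) (hbound k)
  · refine Eventually.of_forall fun k => ?_
    haveI : ∀ _ : Fin k, IsProbabilityMeasure (bernoulliMeasure (p k)) :=
      fun _ => bernoulli_prob (hp0 k) (hp1 k)
    haveI : IsProbabilityMeasure (edgeIndepModel k (m k) (p k)) := by
      unfold edgeIndepModel; infer_instance
    exact prob_le_one
end

section
/- Let m = m(n) and d = d(n) be integers with 1 ≤ d ≤ m, satisfying m(n) → ∞ and d(n)·n/m(n) → ∞ as n → ∞, with d/m bounded away from 1 (there is a constant c < 1 with d(n)/m(n) ≤ c for all n). Then for H drawn from the edge-dependent model H(n, m(n), d(n)), the probability that disc(H) ≥ 1 tends to 1 as n → ∞. -/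
open MeasureTheory ProbabilityTheory Filter Real
open scoped ENNReal NNReal

/-! ### Auxiliary lemmas -/

lemma my_choose_lower : ∀ d m : ℕ, 1 ≤ d → d ≤ m → m - d + 1 ≤ m.choose d := by
  intro d
  induction d with
  | zero => intro m h; omega
  | succ d ih =>
    intro m _ hdm
    rcases Nat.eq_zero_or_pos d with hd | hd
    · subst hd; simp [Nat.choose_one_right]; omega
    · obtain ⟨m', rfl⟩ : ∃ m', m = m' + 1 := ⟨m - 1, by omega⟩
      have h := ih m' hd (by omega)
      have hps : (m' + 1).choose (d + 1) = m'.choose d + m'.choose (d + 1) :=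
        Nat.choose_succ_succ m' d
      omega

lemma my_card_weight (m d : ℕ) :
    (Finset.univ.filter fun v : Fin m → Bool =>
      (Finset.univ.filter fun j => v j = true).card = d).card = m.choose d := by
  have h : ((Finset.univ : Finset (Fin m)).powersetCard d).card = m.choose d := by
    rw [Finset.card_powersetCard, Finset.card_fin]
  rw [← h]
  apply Finset.card_bij (fun v _ => Finset.univ.filter fun j => v j = true)
  · intro v hv
    simp only [Finset.mem_filter] at hv
    simp [Finset.mem_powersetCard, hv.2]
  · intro v1 h1 v2 h2 h
    funext j
    have hj := Finset.ext_iff.mp h j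
    simp only [Finset.mem_filter, Finset.mem_univ, true_and] at hj
    cases hv : v1 j
    · cases hw : v2 j
      · rfl
      · exact absurd (hj.mpr hw) (by simp [hv])
    · exact (hj.mp hv).symm
  · intro s hs
    refine ⟨fun j => decide (j ∈ s), ?_, ?_⟩
    · simp only [Finset.mem_powersetCard] at hs
      simp only [Finset.mem_filter, Finset.mem_univ, true_and, decide_eq_true_eq]
      rw [show (Finset.univ.filter fun j => j ∈ s) = s by ext j; simp]
      exact hs.2
    · ext j; simp

lemma uniformColumn_apply (m d : ℕ) (t : Set (Fin m → Bool)) :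
    uniformColumn m d t =
      ((m.choose d : ℝ≥0∞))⁻¹ *
      ∑ v ∈ Finset.univ.filter (fun v : Fin m → Bool =>
        (Finset.univ.filter fun j => v j = true).card = d), t.indicator 1 v := by
  simp [uniformColumn, Measure.finset_sum_apply, Measure.dirac_apply, my_card_weight]

lemma uniformColumn_isProb (m d : ℕ) (h : d ≤ m) :
    IsProbabilityMeasure (uniformColumn m d) := by
  constructor
  rw [uniformColumn_apply]
  have h1 : ∀ v : Fin m → Bool, (Set.univ : Set (Fin m → Bool)).indicator
      (1 : (Fin m → Bool) → ℝ≥0∞) v = 1 := by intro v; simp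
  simp only [h1, Finset.sum_const, my_card_weight, nsmul_eq_mul, mul_one]
  rw [ENNReal.inv_mul_cancel]
  · exact Nat.cast_ne_zero.mpr (Nat.choose_pos h).ne'
  · exact ENNReal.natCast_ne_top _

lemma uniformColumn_singleton_le (m d : ℕ) (w : Fin m → Bool) :
    uniformColumn m d {w} ≤ ((m.choose d : ℝ≥0∞))⁻¹ := by
  rw [uniformColumn_apply]
  have hle : ∑ v ∈ Finset.univ.filter (fun v : Fin m → Bool =>
        (Finset.univ.filter fun j => v j = true).card = d),
        ({w} : Set (Fin m → Bool)).indicator (1 : (Fin m → Bool) → ℝ≥0∞) v ≤ 1 := by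
    calc _ = ∑ v ∈ Finset.univ.filter (fun v : Fin m → Bool =>
        (Finset.univ.filter fun j => v j = true).card = d),
          (if v = w then (1:ℝ≥0∞) else 0) := by
          apply Finset.sum_congr rfl; intro v _
          by_cases hv : v = w <;> simp [Set.indicator, hv]
      _ ≤ 1 := by rw [Finset.sum_ite_eq']; split <;> simp
  calc _ ≤ ((m.choose d : ℝ≥0∞))⁻¹ * 1 := mul_le_mul_right hle _
    _ = _ := mul_one _

lemma pi_parity_bound (m d n' : ℕ) (hdm : d ≤ m) :
    (Measure.pi fun _ : Fin (n' + 1) => uniformColumn m d)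
      {B | ∀ i, Even ((Finset.univ.filter fun k : Fin (n' + 1) => B k i = true).card)}
      ≤ ((m.choose d : ℝ≥0∞))⁻¹ := by
  haveI := uniformColumn_isProb m d hdm
  set X := Fin m → Bool
  set e := MeasurableEquiv.piFinSuccAbove (fun _ : Fin (n' + 1) => X) 0
  set g : (Fin n' → X) → X := fun r i =>
    decide (¬ Even ((Finset.univ.filter fun k : Fin n' => r k i = true).card)) with hg
  set s : Set (X × (Fin n' → X)) := {p | p.1 = g p.2} with hs
  have hsub : {B : Fin (n' + 1) → X |
      ∀ i, Even ((Finset.univ.filter fun k : Fin (n' + 1) => B k i = true).card)}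
      ⊆ e ⁻¹' s := by
    intro B hB
    simp only [Set.mem_setOf_eq] at hB
    simp only [Set.mem_preimage, hs, Set.mem_setOf_eq, e,
      MeasurableEquiv.piFinSuccAbove_apply, Fin.insertNthEquiv_symm_apply,
      Fin.removeNth, Fin.zero_succAbove]
    funext i
    have hcard : (Finset.univ.filter fun k : Fin (n' + 1) => B k i = true).card
        = (if B 0 i = true then 1 else 0)
          + (Finset.univ.filter fun k : Fin n' => B k.succ i = true).card := by
      rw [Finset.card_filter, Fin.sum_univ_succ, Finset.card_filter]
    have hE := hB i
    rw [hcard, Nat.even_add] at hE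
    simp only [hg]
    cases hb : B 0 i <;> simp [hb, Fin.tail] at hE ⊢ <;> simpa [Fin.tail] using hE
  calc (Measure.pi fun _ : Fin (n' + 1) => uniformColumn m d) _
      ≤ (Measure.pi fun _ : Fin (n' + 1) => uniformColumn m d) (e ⁻¹' s) :=
        measure_mono hsub
    _ = ((uniformColumn m d).prod
          (Measure.pi fun _ : Fin n' => uniformColumn m d)) s :=
        (measurePreserving_piFinSuccAbove (fun _ : Fin (n' + 1) => uniformColumn m d) 0
          ).measure_preimage_equiv s
    _ = ∫⁻ r, uniformColumn m d ((fun x => (x, r)) ⁻¹' s)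
          ∂(Measure.pi fun _ : Fin n' => uniformColumn m d) :=
        Measure.prod_apply_symm ((Set.to_countable s).measurableSet)
    _ ≤ ∫⁻ _, ((m.choose d : ℝ≥0∞))⁻¹
          ∂(Measure.pi fun _ : Fin n' => uniformColumn m d) := by
        apply lintegral_mono
        intro r
        have hslice : ((fun x => (x, r)) ⁻¹' s) = {g r} := by
          ext x; simp [hs]; exact Iff.rfl
        show uniformColumn m d ((fun x => (x, r)) ⁻¹' s) ≤ _
        rw [hslice]
        exact uniformColumn_singleton_le m d (g r)
    _ = ((m.choose d : ℝ≥0∞))⁻¹ := by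
        rw [lintegral_const, measure_univ, mul_one]

lemma disc_zero_parity {m n : ℕ} (A : Fin m → Fin n → Bool) (h : disc A = 0) :
    ∀ i, Even ((Finset.univ.filter fun k => A i k = true).card) := by
  rw [disc, iInf, Nat.sInf_eq_zero] at h
  rcases h with h | h
  · obtain ⟨ψ, hψ⟩ := h
    intro i
    have hle := Finset.le_sup (f := fun i : Fin m =>
        (∑ k : Fin n, if A i k then (if ψ k then (1 : ℤ) else -1) else 0).natAbs)
        (Finset.mem_univ i)
    simp only at hψ hle
    rw [hψ, Nat.le_zero, Int.natAbs_eq_zero] at hle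
    have hz : (((Finset.univ.filter fun k => A i k = true).card : ℕ) : ZMod 2) = 0 := by
      have h2 : (((∑ k : Fin n, if A i k then (if ψ k then (1 : ℤ) else -1) else 0 : ℤ))
          : ZMod 2) = 0 := by rw [hle]; simp
      rw [← h2, Finset.card_filter, Nat.cast_sum]
      push_cast
      apply Finset.sum_congr rfl
      intro k _
      cases A i k <;> cases ψ k <;> simp <;> decide
    exact even_iff_two_dvd.mpr ((ZMod.natCast_eq_zero_iff _ 2).mp hz)
  · exact absurd h (Set.range_nonempty _).ne_empty

lemma edgeDep_isProb (n m d : ℕ) (h : d ≤ m) :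
    IsProbabilityMeasure (edgeDepModel n m d) := by
  haveI := uniformColumn_isProb m d h
  exact Measure.isProbabilityMeasure_map (measurable_of_countable _).aemeasurable

lemma edgeDep_compl_bound (n' m d : ℕ) (h1 : 1 ≤ d) (h : d ≤ m) :
    edgeDepModel (n' + 1) m d {A | 1 ≤ disc A}ᶜ ≤ ((m - d + 1 : ℕ) : ℝ≥0∞)⁻¹ := by
  haveI := uniformColumn_isProb m d h
  have hsub : ({A : Fin m → Fin (n' + 1) → Bool | 1 ≤ disc A})ᶜ ⊆
      {A : Fin m → Fin (n' + 1) → Bool |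
        ∀ i, Even ((Finset.univ.filter fun k => A i k = true).card)} := by
    intro A hA
    have : disc A = 0 := by
      simpa [Nat.lt_one_iff] using hA
    exact disc_zero_parity A this
  calc edgeDepModel (n' + 1) m d {A | 1 ≤ disc A}ᶜ
      ≤ edgeDepModel (n' + 1) m d {A : Fin m → Fin (n' + 1) → Bool |
          ∀ i, Even ((Finset.univ.filter fun k => A i k = true).card)} :=
        measure_mono hsub
    _ = (Measure.pi fun _ : Fin (n' + 1) => uniformColumn m d)
          {B | ∀ i, Even ((Finset.univ.filter fun k : Fin (n' + 1) => B k i = true).card)} := by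
        rw [edgeDepModel, Measure.map_apply (measurable_of_countable _)
          ((Set.to_countable _).measurableSet)]
        rfl
    _ ≤ ((m.choose d : ℝ≥0∞))⁻¹ := pi_parity_bound m d n' h
    _ ≤ ((m - d + 1 : ℕ) : ℝ≥0∞)⁻¹ :=
        ENNReal.inv_le_inv' (Nat.cast_le.mpr (my_choose_lower d m h1 h))

/-- Proposition 9 of "The Phase Transition of Discrepancy in Random Hypergraphs":
if `m → ∞`, `dn/m → ∞` and `d/m` is bounded away from `1`, then w.h.p.
`disc(H) ≥ 1` for `H ∼ ℋ(n, m, d)`. -/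
theorem edge_dependent_disc_ge_one (m d : ℕ → ℕ)
    (hdm : ∀ n, 1 ≤ d n ∧ d n ≤ m n)
    (hm : Tendsto m atTop atTop)
    (hdnm : Tendsto (fun n => (d n : ℝ) * n / m n) atTop atTop)
    (hpc : ∃ c : ℝ, c < 1 ∧ ∀ n, (d n : ℝ) / m n ≤ c) :
    Tendsto (fun n => edgeDepModel n (m n) (d n) {A | 1 ≤ disc A})
      atTop (nhds 1) := by
  obtain ⟨c, hc1, hc⟩ := hpc
  -- the natural number m n - d n + 1 tends to infinity
  have hmd : Tendsto (fun n => m n - d n + 1) atTop atTop := by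
    rw [← tendsto_natCast_atTop_iff (R := ℝ)]
    apply tendsto_atTop_mono (f := fun n => (1 - c) * m n)
    · intro n
      have h1 : 1 ≤ d n := (hdm n).1
      have h2 : d n ≤ m n := (hdm n).2
      have hm1 : (0 : ℝ) < m n := by
        have : 1 ≤ m n := le_trans h1 h2
        exact_mod_cast this
      have hdc : (d n : ℝ) ≤ c * m n := by
        have := hc n
        rw [div_le_iff₀ hm1] at this
        exact this
      have hcast : ((m n - d n + 1 : ℕ) : ℝ) = (m n : ℝ) - d n + 1 := by
        push_cast [Nat.cast_sub h2]
        ring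
      rw [hcast]
      nlinarith
    · apply Tendsto.const_mul_atTop (by linarith : (0:ℝ) < 1 - c)
      exact tendsto_natCast_atTop_iff.mpr hm
  have hε : Tendsto (fun n => ((m n - d n + 1 : ℕ) : ℝ≥0∞)⁻¹) atTop (nhds 0) :=
    ENNReal.tendsto_inv_nat_nhds_zero.comp hmd
  apply tendsto_of_tendsto_of_tendsto_of_le_of_le'
    (g := fun n => 1 - ((m n - d n + 1 : ℕ) : ℝ≥0∞)⁻¹) (h := fun _ => (1 : ℝ≥0∞))
  · have := ENNReal.Tendsto.sub (tendsto_const_nhds (x := (1:ℝ≥0∞)) (f := atTop)) hε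
      (Or.inl ENNReal.one_ne_top)
    simpa using this
  · exact tendsto_const_nhds
  · filter_upwards [eventually_ge_atTop 1] with n hn
    obtain ⟨n', rfl⟩ : ∃ n', n = n' + 1 := ⟨n - 1, by omega⟩
    haveI := edgeDep_isProb (n' + 1) (m (n' + 1)) (d (n' + 1)) (hdm _).2
    have hEm : MeasurableSet {A : Fin (m (n' + 1)) → Fin (n' + 1) → Bool | 1 ≤ disc A} :=
      (Set.to_countable _).measurableSet
    have hcompl := edgeDep_compl_bound n' (m (n' + 1)) (d (n' + 1)) (hdm _).1 (hdm _).2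
    have h1 : edgeDepModel (n' + 1) (m (n' + 1)) (d (n' + 1))
        ({A | 1 ≤ disc A}ᶜ)ᶜ = 1 - edgeDepModel (n' + 1) (m (n' + 1)) (d (n' + 1))
        {A | 1 ≤ disc A}ᶜ := prob_compl_eq_one_sub hEm.compl
    rw [compl_compl] at h1
    rw [h1]
    exact tsub_le_tsub_left hcompl 1
  · filter_upwards with n
    haveI := edgeDep_isProb n (m n) (d n) (hdm n).2
    exact prob_le_one
end

section
/- Let n, m, d, r, ℓ be positive integers with d ≤ m, r ≤ m, ℓ ≤ n, let p = d/m, and let s be a real number with s ≥ 10·d·ℓ/m. Let A be a random m×n {0,1}-matrix whose entries are i.i.d. Bernoulli(p) (the incidence matrix of the edge-independent model H(n,m,p)). Let Q(r, ℓ, s) be the event that there exist subsets R ⊆ {1,…,m} with |R| = r and L ⊆ {1,…,n} with |L| = ℓ such that Σ_{k ∈ L} A_{i,k} ≥ s for every i ∈ R. Then P[ Q(r, ℓ, s) ] ≤ C(m, r) · C(n, ℓ) · exp( −(r·s/2) · log( s·m/(d·ℓ) ) ), where C(a, b) denotes the binomial coefficient a choose b. -/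
open MeasureTheory ProbabilityTheory Filter Real
open scoped ENNReal NNReal

/- auxiliary lemmas -/
lemma keyA (x s : ℝ) (hx : 0 < x) (hs : 10 * x ≤ s) :
    x ^ (⌈s⌉₊ : ℕ) / (Nat.factorial ⌈s⌉₊) ≤ Real.exp (-(s/2) * Real.log (s/x)) := by
  have hs0 : 0 < s := lt_of_lt_of_le (by linarith) hs
  have hts : s ≤ (⌈s⌉₊ : ℝ) := Nat.le_ceil s
  set t : ℕ := ⌈s⌉₊ with htdef
  have ht0 : (0:ℝ) < t := lt_of_lt_of_le hs0 hts
  have htfac : (0:ℝ) < (Nat.factorial t : ℝ) := by positivity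
  have h1 : x ^ t / (Nat.factorial t : ℝ) = (x / t)^t * ((t:ℝ)^t / Nat.factorial t) := by
    rw [div_pow]
    field_simp
  have h2 : ((t:ℝ))^t / (Nat.factorial t : ℝ) ≤ Real.exp t :=
    Real.pow_div_factorial_le_exp _ ht0.le t
  have h3 : x ^ t / (Nat.factorial t : ℝ) ≤ (x * Real.exp 1 / t)^t := by
    rw [h1]
    calc (x / t)^t * ((t:ℝ)^t / Nat.factorial t) ≤ (x / t)^t * Real.exp t := by
          apply mul_le_mul_of_nonneg_left h2 (by positivity)
      _ = (x * Real.exp 1 / t)^t := by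
          have hexp : Real.exp (t:ℝ) = Real.exp 1 ^ t := by
            rw [← Real.exp_nat_mul, mul_one]
          rw [hexp, ← mul_pow]
          congr 1
          ring
  set b : ℝ := x * Real.exp 1 / s with hbdef
  have hb0 : 0 < b := by positivity
  have he : Real.exp 1 < 2.7182818286 := Real.exp_one_lt_d9
  have hb1 : b ≤ 1 := by
    rw [hbdef, div_le_one hs0]
    nlinarith [Real.exp_one_lt_d9, hx]
  have h4 : (x * Real.exp 1 / t)^t ≤ b ^ t := by
    apply pow_le_pow_left₀ (by positivity)
    rw [hbdef]
    exact div_le_div_of_nonneg_left (by positivity) hs0 hts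
  have h5 : (b : ℝ) ^ (t : ℕ) = b ^ ((t : ℕ) : ℝ) := (Real.rpow_natCast b t).symm
  have h6 : b ^ ((t:ℕ) : ℝ) ≤ b ^ (s : ℝ) := Real.rpow_le_rpow_of_exponent_ge hb0 hb1 hts
  have h7 : b ^ (s : ℝ) = Real.exp (Real.log b * s) := by
    rw [Real.rpow_def_of_pos hb0]
  have hu2 : 2 ≤ Real.log (s / x) := by
    have h10 : (10:ℝ) ≤ s / x := (le_div_iff₀ hx).mpr (by linarith)
    have : Real.log 10 ≤ Real.log (s/x) := Real.log_le_log (by norm_num) h10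
    have h2le : (2:ℝ) ≤ Real.log 10 := by
      rw [show (2:ℝ) = Real.log (Real.exp 2) by rw [Real.log_exp]]
      apply Real.log_le_log (Real.exp_pos 2)
      rw [show (2:ℝ) = (1:ℝ) + 1 by norm_num, Real.exp_add]
      nlinarith [Real.exp_one_lt_d9, Real.exp_pos 1]
    linarith
  have h8 : Real.log b * s ≤ -(s/2) * Real.log (s/x) := by
    have hlogb : Real.log b = Real.log x + 1 - Real.log s := by
      rw [hbdef, Real.log_div (by positivity) hs0.ne', Real.log_mul hx.ne' (Real.exp_pos 1).ne',
        Real.log_exp]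
    have hlogu : Real.log (s/x) = Real.log s - Real.log x := Real.log_div hs0.ne' hx.ne'
    nlinarith [hu2, hlogu, hlogb, hs0]
  calc x ^ t / (Nat.factorial t : ℝ) ≤ (x * Real.exp 1 / t)^t := h3
    _ ≤ b ^ t := h4
    _ = b ^ ((t:ℕ):ℝ) := h5
    _ ≤ b ^ (s:ℝ) := h6
    _ = Real.exp (Real.log b * s) := h7
    _ ≤ Real.exp (-(s/2) * Real.log (s/x)) := Real.exp_le_exp.mpr h8

lemma keyB (d m ℓ : ℕ) (hd1 : 1 ≤ d) (hm : 1 ≤ m) (hl1 : 1 ≤ ℓ) (s : ℝ)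
    (hs : 10 * (d : ℝ) * ℓ / m ≤ s) :
    (ℓ.choose ⌈s⌉₊ : ℝ) * ((d : ℝ)/m) ^ (⌈s⌉₊ : ℕ) ≤
      Real.exp (-(s/2) * Real.log (s * m / ((d : ℝ) * ℓ))) := by
  have hd0 : (0:ℝ) < d := by exact_mod_cast hd1
  have hm0 : (0:ℝ) < m := by exact_mod_cast hm
  have hl0 : (0:ℝ) < ℓ := by exact_mod_cast hl1
  set x : ℝ := (d : ℝ) * ℓ / m with hxdef
  have hx : 0 < x := by positivity
  have hs' : 10 * x ≤ s := by
    have : 10 * x = 10 * (d:ℝ) * ℓ / m := by rw [hxdef]; ring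
    linarith
  have harg : s * m / ((d:ℝ) * ℓ) = s / x := by
    rw [hxdef]; field_simp
  rw [harg]
  set t : ℕ := ⌈s⌉₊ with htdef
  have step1 : (ℓ.choose t : ℝ) * ((d:ℝ)/m) ^ t ≤ x ^ t / Nat.factorial t := by
    have h1 : (ℓ.choose t : ℝ) ≤ (ℓ:ℝ) ^ t / Nat.factorial t := Nat.choose_le_pow_div t ℓ
    have h2 : (0:ℝ) ≤ ((d:ℝ)/m) ^ t := by positivity
    calc (ℓ.choose t : ℝ) * ((d:ℝ)/m) ^ t ≤ ((ℓ:ℝ) ^ t / Nat.factorial t) * ((d:ℝ)/m) ^ t :=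
          mul_le_mul_of_nonneg_right h1 h2
      _ = x ^ t / Nat.factorial t := by
          rw [div_mul_eq_mul_div, ← mul_pow, hxdef]
          congr 2
          field_simp
  exact step1.trans (keyA x s hx hs')

lemma bern_true {p : ℝ} : bernoulliMeasure p {true} = ENNReal.ofReal p := by
  simp [_root_.bernoulliMeasure, Measure.dirac_apply]

lemma bern_prob {p : ℝ} (hp0 : 0 ≤ p) (hp1 : p ≤ 1) :
    IsProbabilityMeasure (bernoulliMeasure p) := by
  constructor
  simp only [_root_.bernoulliMeasure, Measure.coe_add, Pi.add_apply, Measure.smul_apply,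
    Measure.dirac_apply, Set.mem_univ, Set.indicator_of_mem, Pi.one_apply, smul_eq_mul, mul_one]
  rw [← ENNReal.ofReal_add hp0 (by linarith)]
  norm_num


/-- Lemma 14 (after Bansal–Meka, Lemma 6 of arXiv:1907.04409) of "The Phase
Transition of Discrepancy in Random Hypergraphs": for `H ∼ ℍ(n, m, d/m)` and
`s ≥ 10dℓ/m`, the probability that some `r × ℓ` sub-matrix of the incidence matrix
has every row sum at least `s` is at most
`C(m,r)·C(n,ℓ)·exp(−(rs/2)·log(sm/(dℓ)))`. -/
theorem submatrix_row_sums_bound (n m d r ℓ : ℕ)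
    (hn : 1 ≤ n) (hm : 1 ≤ m) (hd1 : 1 ≤ d) (hdm : d ≤ m)
    (hr1 : 1 ≤ r) (hrm : r ≤ m) (hl1 : 1 ≤ ℓ) (hln : ℓ ≤ n)
    (s : ℝ) (hs : 10 * (d : ℝ) * ℓ / m ≤ s) :
    edgeIndepModel n m ((d : ℝ) / m)
        {A | ∃ R : Finset (Fin m), ∃ L : Finset (Fin n),
          R.card = r ∧ L.card = ℓ ∧
            ∀ i ∈ R, s ≤ ∑ k ∈ L, (if A i k then (1 : ℝ) else 0)}
      ≤ ENNReal.ofReal ((m.choose r : ℝ) * (n.choose ℓ) *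
          Real.exp (-((r : ℝ) * s / 2) * Real.log (s * m / ((d : ℝ) * ℓ)))) := by
  classical
  have hm0 : (0:ℝ) < m := by exact_mod_cast hm
  set p : ℝ := (d : ℝ) / m with hpdef
  have hp0 : 0 ≤ p := by positivity
  have hp1 : p ≤ 1 := (div_le_one hm0).mpr (by exact_mod_cast hdm)
  haveI hPB : IsProbabilityMeasure (bernoulliMeasure p) := bern_prob hp0 hp1
  set t : ℕ := ⌈s⌉₊ with htdef
  set ν : Measure (Fin n → Bool) := Measure.pi fun _ : Fin n => bernoulliMeasure p with hν
  haveI hPν : IsProbabilityMeasure ν := by rw [hν]; infer_instance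
  set q : ℝ := (ℓ.choose t : ℝ) * p ^ t with hqdef
  have hq0 : 0 ≤ q := by positivity
  -- column bound
  have col : ∀ L : Finset (Fin n), L.card = ℓ →
      ν {v : Fin n → Bool | s ≤ ∑ k ∈ L, (if v k then (1:ℝ) else 0)} ≤ ENNReal.ofReal q := by
    intro L hL
    have hsub : {v : Fin n → Bool | s ≤ ∑ k ∈ L, (if v k then (1:ℝ) else 0)} ⊆
        ⋃ T ∈ Finset.powersetCard t L, {v : Fin n → Bool | ∀ k ∈ T, v k = true} := by
      intro v hv
      have hsum : (∑ k ∈ L, (if v k then (1:ℝ) else 0)) =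
          ((L.filter fun k => v k = true).card : ℝ) := by
        rw [Finset.sum_boole]
      have hcard : t ≤ (L.filter fun k => v k = true).card := by
        rw [htdef]
        apply Nat.ceil_le.mpr
        rw [← hsum]
        exact hv
      obtain ⟨T, hT1, hT2⟩ := Finset.exists_subset_card_eq hcard
      refine Set.mem_iUnion₂.mpr ⟨T, Finset.mem_powersetCard.mpr
        ⟨hT1.trans (Finset.filter_subset _ _), hT2⟩, fun k hk => (Finset.mem_filter.mp (hT1 hk)).2⟩
    have heach : ∀ T ∈ Finset.powersetCard t L,
        ν {v : Fin n → Bool | ∀ k ∈ T, v k = true} = ENNReal.ofReal p ^ t := by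
      intro T hT
      obtain ⟨hTL, hTc⟩ := Finset.mem_powersetCard.mp hT
      have heq : {v : Fin n → Bool | ∀ k ∈ T, v k = true} =
          Set.pi Set.univ (fun k => if k ∈ T then {true} else Set.univ) := by
        ext v
        simp only [Set.mem_setOf_eq, Set.mem_pi, Set.mem_univ, forall_true_left]
        constructor
        · intro h k
          by_cases hk : k ∈ T <;> simp [hk, h k]
        · intro h k hk
          have := h k
          simpa [hk] using this
      rw [heq, hν, Measure.pi_pi]
      have hpt : ∀ k : Fin n,
          bernoulliMeasure p (if k ∈ T then ({true} : Set Bool) else Set.univ) =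
            if k ∈ T then ENNReal.ofReal p else 1 := by
        intro k
        split_ifs
        · exact bern_true
        · exact measure_univ
      rw [Finset.prod_congr rfl fun k _ => hpt k, Finset.prod_ite_mem, Finset.univ_inter, Finset.prod_const, hTc]
    calc ν {v : Fin n → Bool | s ≤ ∑ k ∈ L, (if v k then (1:ℝ) else 0)}
        ≤ ν (⋃ T ∈ Finset.powersetCard t L, {v : Fin n → Bool | ∀ k ∈ T, v k = true}) :=
          measure_mono hsub
      _ ≤ ∑ T ∈ Finset.powersetCard t L, ν {v : Fin n → Bool | ∀ k ∈ T, v k = true} :=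
          measure_biUnion_finset_le _ _
      _ = ∑ _T ∈ Finset.powersetCard t L, ENNReal.ofReal p ^ t :=
          Finset.sum_congr rfl heach
      _ = (Finset.powersetCard t L).card • (ENNReal.ofReal p ^ t) := Finset.sum_const _
      _ = (ℓ.choose t : ℝ≥0∞) * ENNReal.ofReal p ^ t := by
          rw [Finset.card_powersetCard, hL, nsmul_eq_mul]
      _ = ENNReal.ofReal q := by
          rw [hqdef, ENNReal.ofReal_mul (by positivity), ENNReal.ofReal_natCast,
            ENNReal.ofReal_pow hp0]
  -- row bound
  have row : ∀ (R : Finset (Fin m)) (L : Finset (Fin n)), R.card = r → L.card = ℓ →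
      edgeIndepModel n m p
        {A : Fin m → Fin n → Bool | ∀ i ∈ R, s ≤ ∑ k ∈ L, (if A i k then (1:ℝ) else 0)}
        ≤ ENNReal.ofReal (q ^ r) := by
    intro R L hR hL
    have heq : {A : Fin m → Fin n → Bool | ∀ i ∈ R, s ≤ ∑ k ∈ L, (if A i k then (1:ℝ) else 0)} =
        Set.pi Set.univ (fun i => if i ∈ R then
          {v : Fin n → Bool | s ≤ ∑ k ∈ L, (if v k then (1:ℝ) else 0)} else Set.univ) := by
      ext A
      simp only [Set.mem_setOf_eq, Set.mem_pi, Set.mem_univ, forall_true_left]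
      constructor
      · intro h i
        by_cases hi : i ∈ R
        · simpa [hi] using h i hi
        · simp [hi]
      · intro h i hi
        have := h i
        simpa [hi] using this
    rw [edgeIndepModel, heq, Measure.pi_pi]
    have hpt : ∀ i : Fin m,
        ν (if i ∈ R then
          {v : Fin n → Bool | s ≤ ∑ k ∈ L, (if v k then (1:ℝ) else 0)} else Set.univ) =
          if i ∈ R then ν {v : Fin n → Bool | s ≤ ∑ k ∈ L, (if v k then (1:ℝ) else 0)} else 1 := by
      intro i
      split_ifs
      · rfl
      · exact measure_univ
    calc (∏ i : Fin m, (Measure.pi fun _ : Fin n => bernoulliMeasure p)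
            (if i ∈ R then
              {v : Fin n → Bool | s ≤ ∑ k ∈ L, (if v k then (1:ℝ) else 0)} else Set.univ))
        = ∏ i : Fin m, (if i ∈ R then
            ν {v : Fin n → Bool | s ≤ ∑ k ∈ L, (if v k then (1:ℝ) else 0)} else 1) :=
          Finset.prod_congr rfl fun i _ => hpt i
      _ = ν {v : Fin n → Bool | s ≤ ∑ k ∈ L, (if v k then (1:ℝ) else 0)} ^ r := by
          rw [Finset.prod_ite_mem, Finset.univ_inter, Finset.prod_const, hR]
      _ ≤ ENNReal.ofReal q ^ r := pow_le_pow_left' (col L hL) r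
      _ = ENNReal.ofReal (q ^ r) := (ENNReal.ofReal_pow hq0 r).symm
  -- union bound
  have hsub : {A : Fin m → Fin n → Bool | ∃ R : Finset (Fin m), ∃ L : Finset (Fin n),
          R.card = r ∧ L.card = ℓ ∧
            ∀ i ∈ R, s ≤ ∑ k ∈ L, (if A i k then (1 : ℝ) else 0)} ⊆
      ⋃ R ∈ Finset.powersetCard r (Finset.univ : Finset (Fin m)),
        ⋃ L ∈ Finset.powersetCard ℓ (Finset.univ : Finset (Fin n)),
          {A : Fin m → Fin n → Bool | ∀ i ∈ R, s ≤ ∑ k ∈ L, (if A i k then (1:ℝ) else 0)} := by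
    rintro A ⟨R, L, hR, hL, h⟩
    refine Set.mem_biUnion (Finset.mem_powersetCard.mpr ⟨Finset.subset_univ _, hR⟩) ?_
    exact Set.mem_biUnion (Finset.mem_powersetCard.mpr ⟨Finset.subset_univ _, hL⟩) h
  have hbound := keyB d m ℓ hd1 hm hl1 s hs
  calc edgeIndepModel n m p {A : Fin m → Fin n → Bool | ∃ R : Finset (Fin m), ∃ L : Finset (Fin n),
          R.card = r ∧ L.card = ℓ ∧
            ∀ i ∈ R, s ≤ ∑ k ∈ L, (if A i k then (1 : ℝ) else 0)}
      ≤ edgeIndepModel n m p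
          (⋃ R ∈ Finset.powersetCard r (Finset.univ : Finset (Fin m)),
            ⋃ L ∈ Finset.powersetCard ℓ (Finset.univ : Finset (Fin n)),
              {A : Fin m → Fin n → Bool | ∀ i ∈ R, s ≤ ∑ k ∈ L, (if A i k then (1:ℝ) else 0)}) :=
        measure_mono hsub
    _ ≤ ∑ R ∈ Finset.powersetCard r (Finset.univ : Finset (Fin m)),
          edgeIndepModel n m p
            (⋃ L ∈ Finset.powersetCard ℓ (Finset.univ : Finset (Fin n)),
              {A : Fin m → Fin n → Bool | ∀ i ∈ R, s ≤ ∑ k ∈ L, (if A i k then (1:ℝ) else 0)}) :=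
        measure_biUnion_finset_le _ _
    _ ≤ ∑ R ∈ Finset.powersetCard r (Finset.univ : Finset (Fin m)),
          ∑ L ∈ Finset.powersetCard ℓ (Finset.univ : Finset (Fin n)),
            edgeIndepModel n m p
              {A : Fin m → Fin n → Bool | ∀ i ∈ R, s ≤ ∑ k ∈ L, (if A i k then (1:ℝ) else 0)} :=
        Finset.sum_le_sum fun R _ => measure_biUnion_finset_le _ _
    _ ≤ ∑ R ∈ Finset.powersetCard r (Finset.univ : Finset (Fin m)),
          ∑ L ∈ Finset.powersetCard ℓ (Finset.univ : Finset (Fin n)),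
            ENNReal.ofReal (q ^ r) := by
        refine Finset.sum_le_sum fun R hR => Finset.sum_le_sum fun L hL => ?_
        exact row R L (Finset.mem_powersetCard.mp hR).2 (Finset.mem_powersetCard.mp hL).2
    _ = (m.choose r : ℝ≥0∞) * ((n.choose ℓ : ℝ≥0∞) * ENNReal.ofReal (q ^ r)) := by
        rw [Finset.sum_const, Finset.sum_const, Finset.card_powersetCard,
          Finset.card_powersetCard, Finset.card_univ, Finset.card_univ, Fintype.card_fin,
          Fintype.card_fin, nsmul_eq_mul, nsmul_eq_mul]
    _ = ENNReal.ofReal ((m.choose r : ℝ) * ((n.choose ℓ : ℝ) * q ^ r)) := by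
        rw [ENNReal.ofReal_mul (by positivity), ENNReal.ofReal_mul (by positivity),
          ENNReal.ofReal_natCast, ENNReal.ofReal_natCast]
    _ ≤ ENNReal.ofReal ((m.choose r : ℝ) * (n.choose ℓ) *
          Real.exp (-((r : ℝ) * s / 2) * Real.log (s * m / ((d : ℝ) * ℓ)))) := by
        apply ENNReal.ofReal_le_ofReal
        have hqr : q ^ r ≤ Real.exp (-((r:ℝ) * s / 2) * Real.log (s * m / ((d:ℝ) * ℓ))) := by
          calc q ^ r ≤ (Real.exp (-(s/2) * Real.log (s * m / ((d:ℝ) * ℓ)))) ^ r :=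
                pow_le_pow_left₀ hq0 hbound r
            _ = Real.exp (-((r:ℝ) * s / 2) * Real.log (s * m / ((d:ℝ) * ℓ))) := by
                rw [← Real.exp_nat_mul]
                congr 1
                ring
        calc (m.choose r : ℝ) * ((n.choose ℓ : ℝ) * q ^ r)
            ≤ (m.choose r : ℝ) * ((n.choose ℓ : ℝ) *
                Real.exp (-((r:ℝ) * s / 2) * Real.log (s * m / ((d:ℝ) * ℓ)))) := by
              apply mul_le_mul_of_nonneg_left _ (by positivity)
              exact mul_le_mul_of_nonneg_left hqr (by positivity)
          _ = (m.choose r : ℝ) * (n.choose ℓ) *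
                Real.exp (-((r:ℝ) * s / 2) * Real.log (s * m / ((d:ℝ) * ℓ))) := by ring
end
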